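/- arXiv:2002.02022 — 2 statements merged into one kernel-verified Lean document; each statement's English description precedes it below -/
import Mathlib

section
/- Suppose c satisfies (Reg) and (Twist), X is compact with Lipschitz boundary, μ = ρ dx with ρ ∈ C⁰(X) satisfies a (q,1)-Poincaré–Wirtinger inequality with constant C_PW where 1 ≤ q ≤ 2. Fix ε > 0 and let ψ ∈ ℝᴺ satisfy G^i(ψ) > ε for all i, and suppose G is differentiable at ψ with ∂_i G^j(ψ) = ∫_{Lag_i(ψ) ∩ Lag_j(ψ)} ρ(x)/‖∇_x c(x,y_i) − ∇_x c(x,y_j)‖ dℋ^{n−1}(x) for all i ≠ j. Then the undirected graph on the vertex set {1,…,N} that has an edge {i, j} exactly when ∂_i G^j(ψ) ≥ 2^{1−1/q} ε^{1/q} / (C_∇ N² C_PW) is connected. -/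
open MeasureTheory Metric Set Filter Bornology
open scoped RealInnerProductSpace ENNReal NNReal Topology symmDiff

noncomputable section

/-- Euclidean `n`-space. -/
abbrev Euc (n : ℕ) : Type := EuclideanSpace ℝ (Fin n)

/-- The `c^*`-transform `ψ^{c^*}(x) = max_i (-c(x,y_i) - ψ^i)` of a dual vector `ψ`. -/
def cStar {n N : ℕ} (c : Euc n → Fin N → ℝ) (ψ : Fin N → ℝ) (x : Euc n) : ℝ :=
  ⨆ i, (-(c x i) - ψ i)

/-- The `i`-th Laguerre cell associated to the dual vector `ψ`. -/
def Lag {n N : ℕ} (X : Set (Euc n)) (c : Euc n → Fin N → ℝ) (ψ : Fin N → ℝ) (i : Fin N) :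
    Set (Euc n) :=
  {x ∈ X | -(c x i) - ψ i = cStar c ψ x}

/-- The map `G(ψ)^i = μ(Lag_i(ψ))`. -/
def Gmap {n N : ℕ} (μ : Measure (Euc n)) (X : Set (Euc n)) (c : Euc n → Fin N → ℝ)
    (ψ : Fin N → ℝ) (i : Fin N) : ℝ :=
  (μ (Lag X c ψ i)).toReal

/-- Condition (Reg): each `c(·, y_i)` is `C²`. -/
def Reg {n N : ℕ} (c : Euc n → Fin N → ℝ) : Prop :=
  ∀ i, ContDiff ℝ 2 fun x => c x i

/-- Condition (Twist): the gradients `∇_x c(x, y_i)` are pairwise distinct on `X`. -/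
def Twist {n N : ℕ} (X : Set (Euc n)) (c : Euc n → Fin N → ℝ) : Prop :=
  ∀ x ∈ X, ∀ i j : Fin N, i ≠ j →
    gradient (fun z => c z i) x ≠ gradient (fun z => c z j) x

/-- `X` has Lipschitz boundary: near every boundary point, `X` coincides with the epigraph
of a Lipschitz function over some hyperplane. -/
def HasLipschitzBoundary {n : ℕ} (X : Set (Euc n)) : Prop :=
  ∀ x ∈ frontier X, ∃ (v : Euc n) (g : Euc n → ℝ) (K : NNReal) (r : ℝ),
    0 < r ∧ ‖v‖ = 1 ∧ LipschitzWith K g ∧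
    ∀ z ∈ ball x r, (z ∈ X ↔ g (z - ⟪z, v⟫ • v) ≤ ⟪z, v⟫)

/-- The `(q,1)`-Poincaré–Wirtinger inequality with constant `CPW`. -/
def PWIneq {n : ℕ} (μ : Measure (Euc n)) (q CPW : ℝ) : Prop :=
  ∀ f : Euc n → ℝ, ContDiff ℝ 1 f →
    (∫ x, |f x - ∫ z, f z ∂μ| ^ q ∂μ) ^ (1 / q) ≤ CPW * ∫ x, ‖gradient f x‖ ∂μ

/-- Loeper's condition (QC): for each `i`, a convex set `X_i` together with a `C²`
diffeomorphism `exp_i^c : X_i → X` such that all sublevel sets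
`{p ∈ X_i : -c(exp_i^c p, y_k) + c(exp_i^c p, y_i) ≤ t}` are convex. -/
structure LoeperSystem {n N : ℕ} (X : Set (Euc n)) (c : Euc n → Fin N → ℝ) where
  dom : Fin N → Set (Euc n)
  exp : Fin N → Euc n → Euc n
  expInv : Fin N → Euc n → Euc n
  convex_dom : ∀ i, Convex ℝ (dom i)
  contDiffOn_exp : ∀ i, ContDiffOn ℝ 2 (exp i) (dom i)
  contDiffOn_expInv : ∀ i, ContDiffOn ℝ 2 (expInv i) X
  mapsTo_exp : ∀ i, MapsTo (exp i) (dom i) X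
  mapsTo_expInv : ∀ i, MapsTo (expInv i) X (dom i)
  left_inv : ∀ i, ∀ p ∈ dom i, expInv i (exp i p) = p
  right_inv : ∀ i, ∀ z ∈ X, exp i (expInv i z) = z
  sublevel_convex : ∀ i k : Fin N, ∀ t : ℝ,
    Convex ℝ {p ∈ dom i | -(c (exp i p) k) + c (exp i p) i ≤ t}

/-- `(T, λ)` minimizes the semi-discrete optimal transport problem with storage fee
given by the convex indicator function of the set `S`. -/
def IsOptimalPair {n N : ℕ} (μ : Measure (Euc n)) (c : Euc n → Fin N → ℝ)
    (T : Euc n → Fin N) (lam : Fin N → ℝ) (S : Set (Fin N → ℝ)) : Prop :=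
  Measurable T ∧ (∀ i, μ (T ⁻¹' {i}) = ENNReal.ofReal (lam i)) ∧ lam ∈ S ∧
    ∀ (T' : Euc n → Fin N) (lam' : Fin N → ℝ), Measurable T' →
      (∀ i, μ (T' ⁻¹' {i}) = ENNReal.ofReal (lam' i)) → lam' ∈ S →
      ∫ x, c x (T x) ∂μ ≤ ∫ x, c x (T' x) ∂μ

/-- The support of a measure. -/
def msupport {n : ℕ} (μ : Measure (Euc n)) : Set (Euc n) :=
  {x | ∀ U ∈ nhds x, 0 < μ U}

/-- The pseudo `c`-transform `φ^{c†}` of a function `φ`. -/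
def cDagger {n N : ℕ} (μ : Measure (Euc n)) (c : Euc n → Fin N → ℝ) (φ : Euc n → ℝ) :
    Fin N → ℝ :=
  fun i => sSup ((fun x => -(c x i) - φ x) '' msupport μ)

namespace SD

/-- half square of positive part -/
def psq (s : ℝ) : ℝ := max 0 s ^ 2 / 2

lemma psq_hasDerivAt (s : ℝ) : HasDerivAt psq (max 0 s) s := by
  rcases lt_trichotomy s 0 with h | rfl | h
  · have hev : psq =ᶠ[𝓝 s] fun _ => 0 := by
      filter_upwards [Iio_mem_nhds h] with y hy
      simp [psq, max_eq_left (le_of_lt (mem_Iio.mp hy))]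
    have : HasDerivAt (fun _ : ℝ => (0:ℝ)) 0 s := hasDerivAt_const s 0
    simpa [max_eq_left h.le] using this.congr_of_eventuallyEq hev
  · rw [hasDerivAt_iff_isLittleO]
    simp only [max_self, smul_zero, sub_zero, psq, max_eq_left le_rfl, ne_eq]
    rw [Asymptotics.isLittleO_iff]
    intro c hc
    filter_upwards [Metric.ball_mem_nhds (0:ℝ) (by positivity : (0:ℝ) < 2*c)] with y hy
    simp only [Real.ball_eq_Ioo, mem_Ioo] at hy
    have h1 : |max 0 y| ≤ |y| := by
      rcases le_total y 0 with h' | h'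
      · simp [max_eq_left h']
      · simp [max_eq_right h', abs_of_nonneg h']
    have hmn : (0:ℝ) ≤ max 0 y := le_max_left 0 y
    have : |max 0 y ^ 2 / 2 - 0 ^ 2 / 2| ≤ |y| * |y| / 2 := by
      have h2 : max 0 y * max 0 y ≤ |y| * |y| := by
        have := mul_le_mul h1 h1 (abs_nonneg _) (abs_nonneg _)
        rwa [abs_of_nonneg hmn] at this
      rw [abs_of_nonneg (by nlinarith : (0:ℝ) ≤ max 0 y ^ 2 / 2 - 0 ^ 2 / 2)]
      nlinarith
    calc ‖max 0 y ^ 2 / 2 - 0 ^ 2 / 2‖ ≤ |y| * |y| / 2 := this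
      _ ≤ c * ‖y‖ := by
          have : |y| ≤ 2 * c := by
            rw [abs_le]; constructor <;> nlinarith [hy.1, hy.2]
          rw [Real.norm_eq_abs]
          calc |y| * |y| / 2 ≤ (2*c) * |y| / 2 := by nlinarith [abs_nonneg y]
            _ = c * |y| := by ring
  · have hev : psq =ᶠ[𝓝 s] fun y => y ^ 2 / 2 := by
      filter_upwards [Ioi_mem_nhds h] with y hy
      simp [psq, max_eq_right (mem_Ioi.mp hy).le]
    have : HasDerivAt (fun y : ℝ => y ^ 2 / 2) s s := by
      simpa using (((hasDerivAt_id s).pow 2).div_const 2)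
    simpa [max_eq_right h.le] using this.congr_of_eventuallyEq hev

/-- C¹ ramp antiderivative : A = 0 on (-∞,0], A = s - 1/2 on [1,∞). -/
def rampA (s : ℝ) : ℝ := psq s - psq (s - 1)

/-- clamp to [0,1] -/
def clamp01 (s : ℝ) : ℝ := min 1 (max 0 s)

lemma clamp01_eq (s : ℝ) : max 0 s - max 0 (s - 1) = clamp01 s := by
  rcases le_total s 0 with h | h
  · simp [clamp01, max_eq_left h, max_eq_left (by linarith : s - 1 ≤ 0)]
  · rcases le_total s 1 with h1 | h1
    · rw [clamp01, max_eq_right h, max_eq_left (by linarith : s - 1 ≤ 0), min_eq_right h1]; ring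
    · rw [clamp01, max_eq_right h, max_eq_right (by linarith : (0:ℝ) ≤ s - 1),
        min_eq_left h1]; ring

lemma rampA_hasDerivAt (s : ℝ) : HasDerivAt rampA (clamp01 s) s := by
  rw [← clamp01_eq]
  exact (psq_hasDerivAt s).sub (((psq_hasDerivAt (s-1)).comp s ((hasDerivAt_id s).sub_const 1)).congr_deriv (by simp) : HasDerivAt (psq ∘ fun x => id x - 1) (max 0 (s-1)) s)

lemma continuous_clamp01 : Continuous clamp01 :=
  continuous_const.min (continuous_const.max continuous_id)

lemma clamp01_nonneg (s : ℝ) : 0 ≤ clamp01 s := le_min zero_le_one (le_max_left 0 s)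
lemma clamp01_le_one (s : ℝ) : clamp01 s ≤ 1 := min_le_left _ _
lemma clamp01_mono : Monotone clamp01 := fun a b hab =>
  min_le_min le_rfl (max_le_max le_rfl hab)
lemma clamp01_of_nonpos {s : ℝ} (h : s ≤ 0) : clamp01 s = 0 := by
  simp [clamp01, max_eq_left h]
lemma clamp01_of_one_le {s : ℝ} (h : 1 ≤ s) : clamp01 s = 1 := by
  simp [clamp01, max_eq_right (by linarith : (0:ℝ) ≤ s), min_eq_left h]
lemma rampA_of_nonpos {s : ℝ} (h : s ≤ 0) : rampA s = 0 := by
  simp [rampA, psq, max_eq_left h, max_eq_left (by linarith : s - 1 ≤ 0)]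
lemma rampA_of_one_le {s : ℝ} (h : 1 ≤ s) : rampA s = s - 1/2 := by
  have h0 : (0:ℝ) ≤ s := by linarith
  rw [rampA, psq, psq, max_eq_right h0, max_eq_right (by linarith : (0:ℝ) ≤ s - 1)]
  ring

/-- C¹ cutoff: 0 for s ≤ l, 1 for s ≥ r, derivative bounded by 1/(r-l-w). -/
def theta (l r w s : ℝ) : ℝ := (rampA ((s - l)/w) - rampA ((s - (r - w))/w)) * (w / (r - l - w))

def thetaD (l r w s : ℝ) : ℝ :=
  (clamp01 ((s - l)/w) - clamp01 ((s - (r - w))/w)) * (1 / (r - l - w))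

lemma theta_hasDerivAt (l r w : ℝ) (hw : 0 < w) (s : ℝ) :
    HasDerivAt (theta l r w) (thetaD l r w s) s := by
  have hinner : ∀ a : ℝ, HasDerivAt (fun s : ℝ => (s - a)/w) (1/w) s := by
    intro a
    simpa using ((hasDerivAt_id s).sub_const a).div_const w
  have h1 : HasDerivAt (fun s : ℝ => rampA ((s - l)/w)) (clamp01 ((s - l)/w) * (1/w)) s :=
    (rampA_hasDerivAt _).comp s (hinner l)
  have h2 : HasDerivAt (fun s : ℝ => rampA ((s - (r - w))/w))
      (clamp01 ((s - (r - w))/w) * (1/w)) s :=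
    (rampA_hasDerivAt _).comp s (hinner (r - w))
  have := (h1.sub h2).mul_const (w / (r - l - w))
  refine this.congr_deriv ?_
  unfold thetaD
  field_simp

lemma theta_contDiff (l r w : ℝ) (hw : 0 < w) : ContDiff ℝ 1 (theta l r w) := by
  rw [contDiff_one_iff_deriv]
  have hd : ∀ s, deriv (theta l r w) s = thetaD l r w s := fun s =>
    (theta_hasDerivAt l r w hw s).deriv
  constructor
  · exact fun s => (theta_hasDerivAt l r w hw s).differentiableAt
  · have : Continuous (thetaD l r w) := by
      unfold thetaD
      exact (((continuous_clamp01.comp (by fun_prop)).sub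
        (continuous_clamp01.comp (by fun_prop))).mul continuous_const)
    exact (continuous_congr (fun s => (hd s))).mpr this

section thetaProps
variable {l r w : ℝ} (hw : 0 < w) (hlr : l + 2*w ≤ r)
include hw hlr

lemma theta_den_pos : 0 < r - l - w := by linarith

lemma thetaD_nonneg (s : ℝ) : 0 ≤ thetaD l r w s := by
  have h1 : clamp01 ((s - (r - w))/w) ≤ clamp01 ((s - l)/w) := by
    apply clamp01_mono
    exact (div_le_div_iff_of_pos_right hw).mpr (by linarith)

  have := theta_den_pos hw hlr
  unfold thetaD
  have : 0 ≤ 1/(r - l - w) := by positivity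
  nlinarith [sub_nonneg.mpr h1]

lemma thetaD_le (s : ℝ) : thetaD l r w s ≤ 1/(r - l - w) := by
  have hden := theta_den_pos hw hlr
  have h1 : clamp01 ((s - l)/w) - clamp01 ((s - (r - w))/w) ≤ 1 := by
    have := clamp01_le_one ((s - l)/w)
    have := clamp01_nonneg ((s - (r - w))/w)
    linarith
  unfold thetaD
  have h2 : 0 ≤ 1/(r - l - w) := by positivity
  nlinarith

lemma thetaD_eq_zero_of_le {s : ℝ} (hs : s ≤ l) : thetaD l r w s = 0 := by
  unfold thetaD
  rw [clamp01_of_nonpos (by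
    apply div_nonpos_of_nonpos_of_nonneg _ hw.le; linarith),
    clamp01_of_nonpos (by
    apply div_nonpos_of_nonpos_of_nonneg _ hw.le; linarith)]
  ring

lemma thetaD_eq_zero_of_ge {s : ℝ} (hs : r ≤ s) : thetaD l r w s = 0 := by
  unfold thetaD
  rw [clamp01_of_one_le (by rw [le_div_iff₀ hw]; linarith),
    clamp01_of_one_le (by rw [le_div_iff₀ hw]; linarith)]
  ring

lemma theta_eq_zero_of_le {s : ℝ} (hs : s ≤ l) : theta l r w s = 0 := by
  unfold theta
  rw [rampA_of_nonpos (by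
    apply div_nonpos_of_nonpos_of_nonneg _ hw.le; linarith),
    rampA_of_nonpos (by
    apply div_nonpos_of_nonpos_of_nonneg _ hw.le; linarith)]
  ring

lemma theta_eq_one_of_ge {s : ℝ} (hs : r ≤ s) : theta l r w s = 1 := by
  have hden := theta_den_pos hw hlr
  unfold theta
  rw [rampA_of_one_le (by rw [le_div_iff₀ hw]; linarith),
    rampA_of_one_le (by rw [le_div_iff₀ hw]; linarith)]
  field_simp
  ring

lemma theta_monotone : Monotone (theta l r w) := by
  have hdiff : Differentiable ℝ (theta l r w) := fun s =>
    (theta_hasDerivAt l r w hw s).differentiableAt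
  apply monotone_of_deriv_nonneg hdiff
  intro s
  rw [(theta_hasDerivAt l r w hw s).deriv]
  exact thetaD_nonneg hw hlr s

lemma theta_nonneg (s : ℝ) : 0 ≤ theta l r w s := by
  rcases le_total s l with h | h
  · rw [theta_eq_zero_of_le hw hlr h]
  · rw [← theta_eq_zero_of_le hw hlr (le_refl l)]
    exact theta_monotone hw hlr h

lemma theta_le_one (s : ℝ) : theta l r w s ≤ 1 := by
  rcases le_total r s with h | h
  · rw [theta_eq_one_of_ge hw hlr h]
  · rw [← theta_eq_one_of_ge hw hlr (le_refl r)]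
    exact theta_monotone hw hlr h

end thetaProps

section lse

variable {E : Type*} [NormedAddCommGroup E] [NormedSpace ℝ E]
variable {ι : Type*}

/-- sum of exponentials -/
def lseSum (T : Finset ι) (b : ι → E → ℝ) (η : ℝ) (x : E) : ℝ :=
  ∑ i ∈ T, Real.exp (b i x / η)

/-- log-sum-exp smoothing of the max of the `b i`. -/
def lse (T : Finset ι) (b : ι → E → ℝ) (η : ℝ) (x : E) : ℝ :=
  η * Real.log (lseSum T b η x)

lemma lseSum_pos (T : Finset ι) (hT : T.Nonempty) (b : ι → E → ℝ) (η : ℝ) (x : E) :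
    0 < lseSum T b η x :=
  Finset.sum_pos (fun i _ => Real.exp_pos _) hT

lemma lse_contDiff (T : Finset ι) (hT : T.Nonempty) (b : ι → E → ℝ) (η : ℝ)
    (hb : ∀ i, ContDiff ℝ 1 (b i)) : ContDiff ℝ 1 (lse T b η) := by
  have hsum : ContDiff ℝ 1 (lseSum T b η) := by
    unfold lseSum
    exact ContDiff.sum fun i _ => Real.contDiff_exp.comp ((hb i).div_const η)
  rw [contDiff_iff_contDiffAt]
  intro x
  exact contDiffAt_const.mul (hsum.contDiffAt.log (ne_of_gt (lseSum_pos T hT b η x)))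

lemma lse_hasFDerivAt (T : Finset ι) (hT : T.Nonempty) (b : ι → E → ℝ) (η : ℝ)
    (hb : ∀ i, Differentiable ℝ (b i)) (x : E) :
    HasFDerivAt (lse T b η)
      ((η * (lseSum T b η x)⁻¹) •
        ∑ i ∈ T, (Real.exp (b i x / η) * η⁻¹) • fderiv ℝ (b i) x) x := by
  have hs : HasFDerivAt (lseSum T b η)
      (∑ i ∈ T, (Real.exp (b i x / η) * η⁻¹) • fderiv ℝ (b i) x) x := by
    unfold lseSum
    apply HasFDerivAt.fun_sum
    intro i _
    have h1 : HasFDerivAt (fun x => b i x / η) (η⁻¹ • fderiv ℝ (b i) x) x := by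
      have := ((hb i x).hasFDerivAt).const_mul η⁻¹
      simpa [smul_eq_mul, div_eq_inv_mul] using this
    have := h1.exp
    simpa [smul_smul, mul_comm] using this
  have hlog := hs.log (ne_of_gt (lseSum_pos T hT b η x))
  have := hlog.const_mul η
  unfold lse
  simpa [smul_smul, lse] using this

lemma lse_fderiv_norm_le (T : Finset ι) (hT : T.Nonempty) (b : ι → E → ℝ) {η : ℝ}
    (hη : 0 < η) (x : E) {C : ℝ} (hC : 0 ≤ C) (hbC : ∀ i ∈ T, ‖fderiv ℝ (b i) x‖ ≤ C) :
    ‖(η * (lseSum T b η x)⁻¹) •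
        ∑ i ∈ T, (Real.exp (b i x / η) * η⁻¹) • fderiv ℝ (b i) x‖ ≤ C := by
  set S := lseSum T b η x with hS
  have hSpos : 0 < S := lseSum_pos T hT b η x
  rw [norm_smul]
  have h1 : ‖∑ i ∈ T, (Real.exp (b i x / η) * η⁻¹) • fderiv ℝ (b i) x‖
      ≤ ∑ i ∈ T, Real.exp (b i x / η) * η⁻¹ * C := by
    refine (norm_sum_le _ _).trans (Finset.sum_le_sum fun i hi => ?_)
    rw [norm_smul]
    have he : (0:ℝ) ≤ Real.exp (b i x / η) * η⁻¹ := by positivity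
    rw [Real.norm_eq_abs, abs_of_nonneg he]
    exact mul_le_mul_of_nonneg_left (hbC i hi) he
  have h2 : ∑ i ∈ T, Real.exp (b i x / η) * η⁻¹ * C = S * (η⁻¹ * C) := by
    rw [hS, lseSum, Finset.sum_mul]
    congr 1
    ext i
    ring
  have h3 : ‖η * S⁻¹‖ = η * S⁻¹ := by
    rw [Real.norm_eq_abs, abs_of_nonneg (by positivity)]
  calc ‖η * S⁻¹‖ * ‖∑ i ∈ T, (Real.exp (b i x / η) * η⁻¹) • fderiv ℝ (b i) x‖
      ≤ (η * S⁻¹) * (S * (η⁻¹ * C)) := by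
        rw [h3, ← h2]
        exact mul_le_mul_of_nonneg_left h1 (by positivity)
    _ = C := by field_simp

lemma sup'_le_lse (T : Finset ι) (hT : T.Nonempty) (v : ι → ℝ) {η : ℝ} (hη : 0 < η) :
    T.sup' hT v ≤ η * Real.log (∑ i ∈ T, Real.exp (v i / η)) := by
  obtain ⟨j, hj, hjs⟩ := Finset.exists_mem_eq_sup' hT v
  have h1 : Real.exp (v j / η) ≤ ∑ i ∈ T, Real.exp (v i / η) :=
    Finset.single_le_sum (f := fun i => Real.exp (v i / η))
      (fun i _ => (Real.exp_pos _).le) hj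
  have h2 : v j / η ≤ Real.log (∑ i ∈ T, Real.exp (v i / η)) :=
    (Real.le_log_iff_exp_le (lt_of_lt_of_le (Real.exp_pos _) h1)).mpr h1
  rw [hjs]
  calc v j = η * (v j / η) := by field_simp
    _ ≤ η * Real.log (∑ i ∈ T, Real.exp (v i / η)) :=
        mul_le_mul_of_nonneg_left h2 hη.le

lemma lse_le_sup'_add (T : Finset ι) (hT : T.Nonempty) (v : ι → ℝ) {η : ℝ} (hη : 0 < η) :
    η * Real.log (∑ i ∈ T, Real.exp (v i / η)) ≤ T.sup' hT v + η * Real.log T.card := by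
  have h1 : ∑ i ∈ T, Real.exp (v i / η) ≤ T.card * Real.exp (T.sup' hT v / η) := by
    calc ∑ i ∈ T, Real.exp (v i / η) ≤ ∑ _i ∈ T, Real.exp (T.sup' hT v / η) :=
        Finset.sum_le_sum fun i hi => Real.exp_le_exp.mpr
          ((div_le_div_iff_of_pos_right hη).mpr (Finset.le_sup' v hi))
      _ = T.card * Real.exp (T.sup' hT v / η) := by
        rw [Finset.sum_const, nsmul_eq_mul]
  have hpos : (0:ℝ) < ∑ i ∈ T, Real.exp (v i / η) :=
    Finset.sum_pos (fun i _ => Real.exp_pos _) hT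
  have h2 : Real.log (∑ i ∈ T, Real.exp (v i / η))
      ≤ Real.log (T.card * Real.exp (T.sup' hT v / η)) :=
    Real.log_le_log hpos h1
  have hcard : (0:ℝ) < T.card := by
    exact_mod_cast Finset.card_pos.mpr hT
  rw [Real.log_mul (ne_of_gt hcard) (Real.exp_ne_zero _), Real.log_exp] at h2
  have := mul_le_mul_of_nonneg_left h2 hη.le
  rw [mul_add] at this
  calc η * Real.log (∑ i ∈ T, Real.exp (v i / η))
      ≤ η * Real.log T.card + η * (T.sup' hT v / η) := this
    _ = T.sup' hT v + η * Real.log T.card := by field_simp; ring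

end lse

section geom

variable {n N : ℕ}

/-- direction vector: indicator of `Sin`. -/
def dvec (Sin : Finset (Fin N)) : Fin N → ℝ := fun k => if k ∈ Sin then 1 else 0

/-- max over a subfamily -/
def vmax (c : Euc n → Fin N → ℝ) (ψ : Fin N → ℝ) (T : Finset (Fin N)) (hT : T.Nonempty)
    (x : Euc n) : ℝ :=
  T.sup' hT fun i => -(c x i) - ψ i

variable {X : Set (Euc n)} {c : Euc n → Fin N → ℝ} {ψ : Fin N → ℝ}
variable {Sin : Finset (Fin N)} (hSin : Sin.Nonempty) (hSout : Sinᶜ.Nonempty)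

/-- gap function -/
def uu (c : Euc n → Fin N → ℝ) (ψ : Fin N → ℝ) (Sin : Finset (Fin N))
    (hSin : Sin.Nonempty) (hSout : Sinᶜ.Nonempty) (x : Euc n) : ℝ :=
  vmax c ψ Sinᶜ hSout x - vmax c ψ Sin hSin x

lemma nonempty_fin (hSin : Sin.Nonempty) : Nonempty (Fin N) :=
  ⟨hSin.choose⟩

lemma cStar_eq_sup' (φ : Fin N → ℝ) (x : Euc n) :
    haveI := nonempty_fin hSin
    cStar c φ x = Finset.univ.sup' Finset.univ_nonempty fun i => -(c x i) - φ i := by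
  haveI := nonempty_fin hSin
  rw [cStar, Finset.sup'_univ_eq_ciSup]

lemma vmax_shift (T : Finset (Fin N)) (hT : T.Nonempty) (t : ℝ) (x : Euc n) :
    T.sup' hT (fun i => (-(c x i) - ψ i) - t) = vmax c ψ T hT x - t := by
  have h := Finset.comp_sup'_eq_sup'_comp (f := fun i => -(c x i) - ψ i) hT
    (fun s : ℝ => s - t) (fun a b => by simp [max_sub_sub_right])
  exact h.symm

lemma psit_apply (t : ℝ) (i : Fin N) :
    (ψ + t • dvec Sin) i = if i ∈ Sin then ψ i + t else ψ i := by
  simp only [Pi.add_apply, Pi.smul_apply, dvec, smul_eq_mul]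
  split <;> ring

lemma sup'_univ_split (g : Fin N → ℝ) :
    haveI := nonempty_fin hSin
    Finset.univ.sup' Finset.univ_nonempty g = max (Sinᶜ.sup' hSout g) (Sin.sup' hSin g) := by
  haveI := nonempty_fin hSin
  have h := Finset.sup'_union hSout hSin g
  have h2 : (Finset.univ : Finset (Fin N)) = Sinᶜ ∪ Sin := by
    rw [Finset.union_comm]; exact (Finset.union_compl Sin).symm
  rw [← h]
  exact Finset.sup'_congr _ h2 (fun _ _ => rfl)

lemma cStar_split (t : ℝ) (x : Euc n) :
    cStar c (ψ + t • dvec Sin) x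
      = max (vmax c ψ Sinᶜ hSout x) (vmax c ψ Sin hSin x - t) := by
  haveI := nonempty_fin hSin
  rw [cStar_eq_sup' hSin, sup'_univ_split hSin hSout]
  congr 1
  · apply Finset.sup'_congr _ rfl
    intro i hi
    rw [psit_apply]
    simp [Finset.mem_compl.mp hi]
  · rw [← vmax_shift]
    apply Finset.sup'_congr _ rfl
    intro i hi
    rw [psit_apply]
    simp only [hi, if_true]
    ring

lemma cStar_base (x : Euc n) :
    cStar c ψ x = max (vmax c ψ Sinᶜ hSout x) (vmax c ψ Sin hSin x) := by
  have := cStar_split hSin hSout (c := c) (ψ := ψ) 0 x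
  simpa using this

lemma psit_out {j : Fin N} (hj : j ∈ Sinᶜ) (t : ℝ) : (ψ + t • dvec Sin) j = ψ j := by
  rw [psit_apply]; simp [Finset.mem_compl.mp hj]

lemma psit_in {i : Fin N} (hi : i ∈ Sin) (t : ℝ) : (ψ + t • dvec Sin) i = ψ i + t := by
  rw [psit_apply]; simp [hi]

lemma le_vmax {T : Finset (Fin N)} {hT : T.Nonempty} {i : Fin N} (hi : i ∈ T) (x : Euc n) :
    -(c x i) - ψ i ≤ vmax c ψ T hT x :=
  Finset.le_sup' (fun i => -(c x i) - ψ i) hi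

include hSin hSout in
lemma lag_out_mono {j : Fin N} (hj : j ∈ Sinᶜ) {t : ℝ} (ht : 0 ≤ t) :
    Lag X c ψ j ⊆ Lag X c (ψ + t • dvec Sin) j := by
  rintro x ⟨hxX, hxe⟩
  rw [cStar_base hSin hSout] at hxe
  have hle : -(c x j) - ψ j ≤ vmax c ψ Sinᶜ hSout x := le_vmax hj x
  have hMo : -(c x j) - ψ j = vmax c ψ Sinᶜ hSout x := le_antisymm hle (hxe ▸ le_max_left _ _)
  have hMi : vmax c ψ Sin hSin x ≤ vmax c ψ Sinᶜ hSout x := by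
    rw [← hMo, hxe]; exact le_max_right _ _
  refine ⟨hxX, ?_⟩
  rw [psit_out hj, cStar_split hSin hSout, hMo,
    max_eq_left (by linarith : vmax c ψ Sin hSin x - t ≤ vmax c ψ Sinᶜ hSout x)]

lemma uu_nonneg_of_lag_out {j : Fin N} (hj : j ∈ Sinᶜ) {x : Euc n}
    (hx : x ∈ Lag X c ψ j) : 0 ≤ uu c ψ Sin hSin hSout x := by
  obtain ⟨_, hxe⟩ := hx
  rw [cStar_base hSin hSout] at hxe
  have hle : -(c x j) - ψ j ≤ vmax c ψ Sinᶜ hSout x := le_vmax hj x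
  have : vmax c ψ Sin hSin x ≤ vmax c ψ Sinᶜ hSout x :=
    le_trans (hxe ▸ le_max_right _ _) hle
  rw [uu]; linarith

lemma uu_le_of_lag_in {i : Fin N} (hi : i ∈ Sin) {t : ℝ} {x : Euc n}
    (hx : x ∈ Lag X c (ψ + t • dvec Sin) i) : uu c ψ Sin hSin hSout x ≤ -t := by
  obtain ⟨_, hxe⟩ := hx
  rw [psit_in hi, cStar_split hSin hSout] at hxe
  have h1 : -(c x i) - ψ i ≤ vmax c ψ Sin hSin x := le_vmax hi x
  have h2 : vmax c ψ Sinᶜ hSout x ≤ -(c x i) - (ψ i + t) := hxe ▸ le_max_left _ _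
  rw [uu]; linarith

lemma mem_out_union_iff {t : ℝ} {x : Euc n} (hxX : x ∈ X) :
    (∃ j ∈ Sinᶜ, x ∈ Lag X c (ψ + t • dvec Sin) j) ↔ -t ≤ uu c ψ Sin hSin hSout x := by
  constructor
  · rintro ⟨j, hj, _, hxe⟩
    rw [psit_out hj, cStar_split hSin hSout] at hxe
    have h1 : -(c x j) - ψ j ≤ vmax c ψ Sinᶜ hSout x := le_vmax hj x
    have h2 : vmax c ψ Sin hSin x - t ≤ -(c x j) - ψ j := hxe ▸ le_max_right _ _
    rw [uu]; linarith
  · intro h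
    obtain ⟨j, hj, hjs⟩ := Finset.exists_mem_eq_sup' hSout fun i => -(c x i) - ψ i
    refine ⟨j, hj, hxX, ?_⟩
    rw [psit_out hj, cStar_split hSin hSout, ← hjs,
      max_eq_left (by rw [uu] at h; linarith)]
    rfl

variable (hc : ∀ i, Continuous fun x => c x i)
include hc

lemma continuous_vmax (T : Finset (Fin N)) (hT : T.Nonempty) (φ : Fin N → ℝ) :
    Continuous fun x => vmax c φ T hT x := by
  rw [continuous_iff_continuousAt]
  intro x
  exact ContinuousAt.finset_sup'_apply hT fun i _ =>
    (((hc i).neg).sub continuous_const).continuousAt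

lemma continuous_uu : Continuous (uu c ψ Sin hSin hSout) :=
  (continuous_vmax hc _ hSout ψ).sub (continuous_vmax hc _ hSin ψ)

include hSin in
lemma continuous_cStar (φ : Fin N → ℝ) : Continuous (cStar c φ) := by
  haveI := nonempty_fin hSin
  have : cStar c φ = fun x => Finset.univ.sup' Finset.univ_nonempty fun i => -(c x i) - φ i :=
    funext fun x => cStar_eq_sup' hSin φ x
  rw [this]
  rw [continuous_iff_continuousAt]
  intro x
  exact ContinuousAt.finset_sup'_apply _ fun i _ =>
    (((hc i).neg).sub continuous_const).continuousAt

include hSin in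
lemma isClosed_lag (hX : IsClosed X) (φ : Fin N → ℝ) (i : Fin N) :
    IsClosed (Lag X c φ i) := by
  have : Lag X c φ i = X ∩ {x | -(c x i) - φ i = cStar c φ x} := rfl
  rw [this]
  exact hX.inter (isClosed_eq (((hc i).neg).sub continuous_const) (continuous_cStar hSin hc φ))

end geom

section main

variable {n N : ℕ} {X : Set (Euc n)} {c : Euc n → Fin N → ℝ}
  {ρ : Euc n → ℝ} {μ : Measure (Euc n)} {ψ : Fin N → ℝ}
  {q CPW Cgrad ε : ℝ} {Sin : Finset (Fin N)}

lemma norm_gradient_eq (f : Euc n → ℝ) (x : Euc n) : ‖gradient f x‖ = ‖fderiv ℝ f x‖ := by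
  rw [gradient, LinearIsometryEquiv.norm_map]

lemma mu_compl_zero (hXc : IsClosed X) (hρ0 : ∀ x ∉ X, ρ x = 0)
    (hμ : μ = volume.withDensity fun x => ENNReal.ofReal (ρ x)) : μ Xᶜ = 0 := by
  rw [hμ, withDensity_apply _ hXc.measurableSet.compl]
  have h : ∀ᵐ x ∂(volume.restrict Xᶜ), ENNReal.ofReal (ρ x) = (fun _ => (0:ℝ≥0∞)) x := by
    rw [ae_restrict_iff' hXc.measurableSet.compl]
    filter_upwards with x hx
    rw [hρ0 x hx, ENNReal.ofReal_zero]
  rw [lintegral_congr_ae h, lintegral_zero]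

lemma restrict_X_eq (hXc : IsClosed X) (hρ0 : ∀ x ∉ X, ρ x = 0)
    (hμ : μ = volume.withDensity fun x => ENNReal.ofReal (ρ x)) : μ.restrict X = μ := by
  apply Measure.restrict_eq_self_of_ae_mem
  have h0 := mu_compl_zero hXc hρ0 hμ
  rw [← compl_compl X]
  exact compl_mem_ae_iff.mpr h0

lemma master [IsProbabilityMeasure μ]
    (hXcpt : IsCompact X)
    (hreg : Reg c)
    (hρ0 : ∀ x ∉ X, ρ x = 0)
    (hμ : μ = volume.withDensity fun x => ENNReal.ofReal (ρ x))
    (hq1 : 1 ≤ q)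
    (hCPW : 0 < CPW) (hPW : PWIneq μ q CPW)
    (hCgrad : ∀ x ∈ X, ∀ i, ‖gradient (fun z => c z i) x‖ ≤ Cgrad) (hCg0 : 0 < Cgrad)
    (hε : 0 < ε)
    (hSin : Sin.Nonempty) (hSout : Sinᶜ.Nonempty)
    {i0 j0 : Fin N} (hi0 : i0 ∈ Sin) (hj0 : j0 ∈ Sinᶜ)
    {t η w : ℝ} (ht : 0 < t) (hη : 0 < η) (hw : 0 < w)
    (hplateau : 2 * (η * Real.log N) + 2 * w ≤ t)
    (hG1 : ε < Gmap μ X c ψ j0)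
    (hG0 : ε < Gmap μ X c (ψ + t • dvec Sin) i0) :
    ε ^ (1/q) * 2 ^ (1/q - 1) * (t - 2*(η * Real.log N) - w)
      ≤ 2 * CPW * Cgrad *
        ∑ j ∈ Sinᶜ, (Gmap μ X c (ψ + t • dvec Sin) j - Gmap μ X c ψ j) := by
  classical
  have hq0 : 0 < q := lt_of_lt_of_le one_pos hq1
  have hc : ∀ i, Continuous fun x => c x i := fun i => (hreg i).continuous
  have hN1 : 1 ≤ (N : ℝ) := by
    have : Nonempty (Fin N) := nonempty_fin hSin
    have hN : 0 < N := Fin.pos (Classical.arbitrary (Fin N))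
    exact_mod_cast hN
  set a : ℝ := η * Real.log N with ha
  have ha0 : 0 ≤ a := mul_nonneg hη.le (Real.log_nonneg hN1)
  set l : ℝ := -t + a with hl
  set r : ℝ := -a with hr
  have hlr : l + 2*w ≤ r := by rw [hl, hr]; linarith
  have hden : 0 < r - l - w := theta_den_pos hw hlr
  have hdeneq : r - l - w = t - 2*a - w := by rw [hl, hr]; ring
  set b : Fin N → Euc n → ℝ := fun i x => -(c x i) - ψ i with hb
  set uη : Euc n → ℝ := fun x => lse Sinᶜ b η x - lse Sin b η x with huη
  set f : Euc n → ℝ := theta l r w ∘ uη with hf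
  set U : Euc n → ℝ := uu c ψ Sin hSin hSout with hU
  set ψt : Fin N → ℝ := ψ + t • dvec Sin with hψt
  -- basic regularity
  have hbCD : ∀ i, ContDiff ℝ 1 (b i) := fun i =>
    (((hreg i).of_le (by norm_num)).neg).sub contDiff_const
  have hbdiff : ∀ i, Differentiable ℝ (b i) := fun i => (hbCD i).differentiable one_ne_zero
  have huηCD : ContDiff ℝ 1 uη :=
    (lse_contDiff Sinᶜ hSout b η hbCD).sub (lse_contDiff Sin hSin b η hbCD)
  have hfCD : ContDiff ℝ 1 f := (theta_contDiff l r w hw).comp huηCD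
  -- uη is close to U
  have hlogcard : ∀ T : Finset (Fin N), T.Nonempty → η * Real.log T.card ≤ a := by
    intro T hT
    rw [ha]
    apply mul_le_mul_of_nonneg_left _ hη.le
    apply Real.log_le_log (by exact_mod_cast Finset.card_pos.mpr hT)
    exact_mod_cast (Finset.card_le_univ T).trans_eq (Finset.card_univ.trans (Fintype.card_fin N))
  have hclose : ∀ x : Euc n, |uη x - U x| ≤ a := by
    intro x
    have ho1 : vmax c ψ Sinᶜ hSout x ≤ lse Sinᶜ b η x :=
      sup'_le_lse Sinᶜ hSout (fun i => b i x) hη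
    have ho2 : lse Sinᶜ b η x ≤ vmax c ψ Sinᶜ hSout x + η * Real.log Sinᶜ.card :=
      lse_le_sup'_add Sinᶜ hSout (fun i => b i x) hη
    have hi1 : vmax c ψ Sin hSin x ≤ lse Sin b η x :=
      sup'_le_lse Sin hSin (fun i => b i x) hη
    have hi2 : lse Sin b η x ≤ vmax c ψ Sin hSin x + η * Real.log Sin.card :=
      lse_le_sup'_add Sin hSin (fun i => b i x) hη
    have hco := hlogcard Sinᶜ hSout
    have hci := hlogcard Sin hSin
    have hUeq : U x = vmax c ψ Sinᶜ hSout x - vmax c ψ Sin hSin x := rfl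
    rw [abs_le]
    constructor
    · simp only [huη, hUeq]
      linarith
    · simp only [huη, hUeq]
      linarith
  -- the intermediate band
  set E : Set (Euc n) := X ∩ (U ⁻¹' Ioo (-t) 0) with hE
  have hUc : Continuous U := continuous_uu hSin hSout hc
  have hEmeas : MeasurableSet E :=
    hXcpt.isClosed.measurableSet.inter (hUc.measurable measurableSet_Ioo)
  -- pointwise gradient bound
  have hgradbound : ∀ x ∈ X,
      ‖gradient f x‖ ≤ (2*Cgrad/(r - l - w)) * E.indicator (fun _ => (1:ℝ)) x := by
    intro x hx
    have hDo := lse_hasFDerivAt Sinᶜ hSout b η hbdiff x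
    have hDi := lse_hasFDerivAt Sin hSin b η hbdiff x
    have hDu := hDo.sub hDi
    have hfd := (theta_hasDerivAt l r w hw (uη x)).comp_hasFDerivAt x hDu
    rw [norm_gradient_eq, hfd.fderiv]
    by_cases h0 : thetaD l r w (uη x) = 0
    · rw [h0, zero_smul, norm_zero]
      have : (0:ℝ) ≤ E.indicator (fun _ => (1:ℝ)) x :=
        Set.indicator_nonneg (fun _ _ => zero_le_one) x
      positivity
    · have hlu : l < uη x := by
        by_contra hle
        push_neg at hle
        exact h0 (thetaD_eq_zero_of_le hw hlr hle)
      have hur : uη x < r := by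
        by_contra hge
        push_neg at hge
        exact h0 (thetaD_eq_zero_of_ge hw hlr hge)
      have hcl := abs_le.mp (hclose x)
      have hxE : x ∈ E := by
        refine ⟨hx, ?_⟩
        simp only [mem_preimage, mem_Ioo]
        constructor
        · rw [hl] at hlu; linarith [hcl.2]
        · rw [hr] at hur; linarith [hcl.1]
      rw [Set.indicator_of_mem hxE, mul_one, norm_smul]
      have hbC : ∀ (T : Finset (Fin N)), ∀ i ∈ T, ‖fderiv ℝ (b i) x‖ ≤ Cgrad := by
        intro T i _
        have h1 : HasFDerivAt (b i) (-(fderiv ℝ (fun z => c z i) x)) x :=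
          ((((hreg i).differentiable (by norm_num)) x).hasFDerivAt.neg).sub_const (ψ i)
        rw [h1.fderiv, norm_neg, ← norm_gradient_eq]
        exact hCgrad x hx i
      have h1 := lse_fderiv_norm_le Sinᶜ hSout b hη x hCg0.le (hbC Sinᶜ)
      have h2 := lse_fderiv_norm_le Sin hSin b hη x hCg0.le (hbC Sin)
      have hDun : ‖(η * (lseSum Sinᶜ b η x)⁻¹) •
            ∑ i ∈ Sinᶜ, (Real.exp (b i x / η) * η⁻¹) • fderiv ℝ (b i) x -
          (η * (lseSum Sin b η x)⁻¹) •
            ∑ i ∈ Sin, (Real.exp (b i x / η) * η⁻¹) • fderiv ℝ (b i) x‖ ≤ 2*Cgrad := by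
        refine (norm_sub_le _ _).trans ?_
        linarith
      have hθab : |thetaD l r w (uη x)| ≤ 1/(r - l - w) := by
        rw [abs_of_nonneg (thetaD_nonneg hw hlr _)]
        exact thetaD_le hw hlr _
      calc |thetaD l r w (uη x)| * ‖_‖ ≤ (1/(r - l - w)) * (2*Cgrad) := by
            apply mul_le_mul hθab hDun (norm_nonneg _) (by positivity)
        _ = 2*Cgrad/(r - l - w) := by ring
  -- measure of band controlled by ∑ (G j ψt − G j ψ)
  have hband : (μ E).toReal ≤ ∑ j ∈ Sinᶜ, (Gmap μ X c ψt j - Gmap μ X c ψ j) := by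
    have hsub : E ⊆ ⋃ j ∈ Sinᶜ, (Lag X c ψt j \ Lag X c ψ j) := by
      rintro x ⟨hxX, hxI⟩
      rw [mem_preimage, mem_Ioo] at hxI
      obtain ⟨j, hj, hxj⟩ := (mem_out_union_iff hSin hSout hxX).mpr (le_of_lt hxI.1)
      apply Set.mem_biUnion hj
      refine ⟨hxj, fun hxold => ?_⟩
      exact absurd (uu_nonneg_of_lag_out hSin hSout hj hxold) (by linarith [hxI.2])
    have h1 : μ E ≤ ∑ j ∈ Sinᶜ, μ (Lag X c ψt j \ Lag X c ψ j) :=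
      (measure_mono hsub).trans (measure_biUnion_finset_le _ _)
    have h2 : ∀ j ∈ Sinᶜ, (μ (Lag X c ψt j \ Lag X c ψ j)).toReal
        = Gmap μ X c ψt j - Gmap μ X c ψ j := by
      intro j hj
      have hsubj : Lag X c ψ j ⊆ Lag X c ψt j := lag_out_mono hSin hSout hj ht.le
      have hmeasj : MeasurableSet (Lag X c ψ j) :=
        (isClosed_lag hSin hc hXcpt.isClosed ψ j).measurableSet
      rw [measure_diff hsubj hmeasj.nullMeasurableSet (measure_ne_top μ _),
        ENNReal.toReal_sub_of_le (measure_mono hsubj) (measure_ne_top μ _)]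
      rfl
    calc (μ E).toReal ≤ (∑ j ∈ Sinᶜ, μ (Lag X c ψt j \ Lag X c ψ j)).toReal :=
          ENNReal.toReal_mono (ENNReal.sum_ne_top.mpr fun j _ => measure_ne_top μ _) h1
      _ = ∑ j ∈ Sinᶜ, (μ (Lag X c ψt j \ Lag X c ψ j)).toReal :=
          ENNReal.toReal_sum fun j _ => measure_ne_top μ _
      _ = ∑ j ∈ Sinᶜ, (Gmap μ X c ψt j - Gmap μ X c ψ j) := Finset.sum_congr rfl h2
  -- integral of gradient bound
  have hrest : μ.restrict X = μ := restrict_X_eq hXcpt.isClosed hρ0 hμ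
  have hgradint : ∫ x, ‖gradient f x‖ ∂μ ≤ (2*Cgrad/(r - l - w)) * (μ E).toReal := by
    have hgradcont : Continuous fun x => ‖fderiv ℝ f x‖ := (hfCD.continuous_fderiv one_ne_zero).norm
    have hgeq : (fun x => ‖gradient f x‖) = fun x => ‖fderiv ℝ f x‖ := funext (norm_gradient_eq f)
    rw [hgeq]
    have hI1 : IntegrableOn (fun x => ‖fderiv ℝ f x‖) X μ :=
      hgradcont.continuousOn.integrableOn_compact hXcpt
    have hI2 : IntegrableOn (fun x => (2*Cgrad/(r - l - w)) * E.indicator (fun _ => (1:ℝ)) x) X μ := by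
      apply Integrable.integrableOn
      apply Integrable.const_mul
      rw [integrable_indicator_iff hEmeas]
      exact (integrableOn_const_iff).mpr (Or.inr (measure_lt_top μ E))
    have hre : ∫ x, ‖fderiv ℝ f x‖ ∂μ = ∫ x in X, ‖fderiv ℝ f x‖ ∂μ := by rw [hrest]
    rw [hre]
    calc ∫ x in X, ‖fderiv ℝ f x‖ ∂μ
        ≤ ∫ x in X, (2*Cgrad/(r - l - w)) * E.indicator (fun _ => (1:ℝ)) x ∂μ := by
          apply setIntegral_mono_on hI1 hI2 hXcpt.isClosed.measurableSet
          intro x hx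
          have := hgradbound x hx
          rwa [norm_gradient_eq f x] at this
      _ = (2*Cgrad/(r - l - w)) * ∫ x in X, E.indicator (fun _ => (1:ℝ)) x ∂μ :=
          integral_const_mul _ _
      _ = (2*Cgrad/(r - l - w)) * (μ E).toReal := by
          rw [setIntegral_indicator hEmeas, setIntegral_const,
            Set.inter_eq_right.mpr (fun x (hx : x ∈ E) => hx.1), smul_eq_mul, mul_one, measureReal_def]
  -- values of f
  have hf01 : ∀ x, 0 ≤ f x ∧ f x ≤ 1 := fun x =>
    ⟨theta_nonneg hw hlr (uη x), theta_le_one hw hlr (uη x)⟩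
  have hfapp : ∀ x, f x = theta l r w (uη x) := fun _ => rfl
  have hf1 : ∀ x ∈ Lag X c ψ j0, f x = 1 := by
    intro x hx
    have hU0 : 0 ≤ U x := uu_nonneg_of_lag_out hSin hSout hj0 hx
    have hcl := abs_le.mp (hclose x)
    rw [hfapp]
    apply theta_eq_one_of_ge hw hlr
    rw [hr]
    linarith [hcl.1]
  have hf0 : ∀ x ∈ Lag X c ψt i0, f x = 0 := by
    intro x hx
    have hUt : U x ≤ -t := uu_le_of_lag_in hSin hSout hi0 hx
    have hcl := abs_le.mp (hclose x)
    rw [hfapp]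
    apply theta_eq_zero_of_le hw hlr
    rw [hl]
    linarith [hcl.2]
  -- the mean
  have hfInt : Integrable f μ := by
    refine ⟨(hfCD.continuous).aestronglyMeasurable, ?_⟩
    apply HasFiniteIntegral.of_bounded (C := 1)
    filter_upwards with x
    rw [Real.norm_eq_abs, abs_of_nonneg (hf01 x).1]
    exact (hf01 x).2
  set m : ℝ := ∫ z, f z ∂μ with hm
  have hm0 : 0 ≤ m := integral_nonneg fun x => (hf01 x).1
  have hm1 : m ≤ 1 := by
    calc m ≤ ∫ _z, (1:ℝ) ∂μ := integral_mono hfInt (integrable_const 1) fun x => (hf01 x).2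
      _ = 1 := by simp
  -- lower bound for the q-integral
  have hLHS : ε * 2 ^ (1 - q) ≤ ∫ x, |f x - m| ^ q ∂μ := by
    set L1 : Set (Euc n) := Lag X c ψ j0 with hL1
    set L0 : Set (Euc n) := Lag X c ψt i0 with hL0
    have hL1m : MeasurableSet L1 := (isClosed_lag hSin hc hXcpt.isClosed ψ j0).measurableSet
    have hL0m : MeasurableSet L0 := (isClosed_lag hSin hc hXcpt.isClosed ψt i0).measurableSet
    have hdisj : Disjoint L1 L0 := by
      rw [Set.disjoint_left]
      intro x hx1 hx0
      have h1 := uu_nonneg_of_lag_out hSin hSout hj0 hx1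
      have h0 := uu_le_of_lag_in hSin hSout hi0 hx0
      linarith
    have hint : Continuous fun x => |f x - m| ^ q := by
      apply Continuous.rpow_const ((hfCD.continuous.sub continuous_const).abs)
      exact fun x => Or.inr hq0.le
    have hIq : Integrable (fun x => |f x - m| ^ q) μ := by
      refine ⟨hint.aestronglyMeasurable, ?_⟩
      apply HasFiniteIntegral.of_bounded (C := 1)
      filter_upwards with x
      rw [Real.norm_eq_abs, abs_of_nonneg (Real.rpow_nonneg (abs_nonneg _) q)]
      apply Real.rpow_le_one (abs_nonneg _) _ hq0.le
      rw [abs_le]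
      constructor
      · linarith [(hf01 x).1, (hf01 x).2, hm0, hm1]
      · linarith [(hf01 x).1, (hf01 x).2, hm0, hm1]
    have h1 : ∫ x in L1, |f x - m| ^ q ∂μ = (1-m)^q * (μ L1).toReal := by
      rw [setIntegral_congr_fun hL1m (g := fun _ => (1-m)^q)
        (fun x hx => by rw [hf1 x hx, abs_of_nonneg (by linarith : (0:ℝ) ≤ 1 - m)]),
        setIntegral_const, smul_eq_mul, mul_comm, measureReal_def]
    have h0 : ∫ x in L0, |f x - m| ^ q ∂μ = m^q * (μ L0).toReal := by
      rw [setIntegral_congr_fun hL0m (g := fun _ => m^q)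
        (fun x hx => by rw [hf0 x hx, zero_sub, abs_neg, abs_of_nonneg hm0]),
        setIntegral_const, smul_eq_mul, mul_comm, measureReal_def]
    have hge : (1-m)^q * (μ L1).toReal + m^q * (μ L0).toReal ≤ ∫ x, |f x - m| ^ q ∂μ := by
      rw [← h1, ← h0, ← setIntegral_union hdisj hL0m hIq.integrableOn hIq.integrableOn]
      exact setIntegral_le_integral hIq
        (Filter.Eventually.of_forall fun x => Real.rpow_nonneg (abs_nonneg _) q)
    have hconv : (2:ℝ)^(1-q) ≤ (1-m)^q + m^q := by
      have hcc := (convexOn_rpow hq1).2 (mem_Ici.mpr (by linarith : (0:ℝ) ≤ 1-m))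
        (mem_Ici.mpr hm0) (by norm_num : (0:ℝ) ≤ 1/2) (by norm_num : (0:ℝ) ≤ 1/2)
        (by norm_num : (1:ℝ)/2 + 1/2 = 1)
      simp only [smul_eq_mul] at hcc
      have heq : (1:ℝ)/2 * (1-m) + 1/2 * m = 1/2 := by ring
      rw [heq] at hcc
      have h2q : ((1:ℝ)/2)^q = 2^(-q) := by
        rw [Real.div_rpow zero_le_one (by norm_num : (0:ℝ) ≤ 2), Real.one_rpow,
          Real.rpow_neg (by norm_num : (0:ℝ) ≤ 2), one_div]
      rw [h2q] at hcc
      have h1q : (2:ℝ)^(1-q) = 2 * 2^(-q) := by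
        rw [sub_eq_add_neg, Real.rpow_add (by norm_num : (0:ℝ) < 2), Real.rpow_one]
      rw [h1q]
      linarith
    calc ε * 2^(1-q) ≤ ε * ((1-m)^q + m^q) := mul_le_mul_of_nonneg_left hconv hε.le
      _ ≤ (1-m)^q * (μ L1).toReal + m^q * (μ L0).toReal := by
          have hεL1 : ε ≤ (μ L1).toReal := hG1.le
          have hεL0 : ε ≤ (μ L0).toReal := hG0.le
          have hp1 : (0:ℝ) ≤ (1-m)^q := Real.rpow_nonneg (by linarith) q
          have hp0 : (0:ℝ) ≤ m^q := Real.rpow_nonneg hm0 q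
          nlinarith
      _ ≤ ∫ x, |f x - m| ^ q ∂μ := hge
  -- Poincaré-Wirtinger
  have hpw := hPW f hfCD
  rw [← hm] at hpw
  -- finish
  have hQ1 : ε ^ (1/q) * 2 ^ (1/q - 1) ≤ (∫ x, |f x - m| ^ q ∂μ) ^ (1/q) := by
    have h1 : (ε * 2^(1-q)) ^ (1/q) ≤ (∫ x, |f x - m| ^ q ∂μ) ^ (1/q) :=
      Real.rpow_le_rpow (by positivity) hLHS (by positivity)
    have h2 : (ε * 2^(1-q)) ^ (1/q) = ε^(1/q) * 2^(1/q - 1) := by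
      rw [Real.mul_rpow hε.le (by positivity), ← Real.rpow_mul (by norm_num : (0:ℝ) ≤ 2)]
      congr 1
      field_simp
    rw [← h2]
    exact h1
  have hQ2 : (∫ x, |f x - m| ^ q ∂μ) ^ (1/q)
      ≤ CPW * ((2*Cgrad/(r - l - w)) * ∑ j ∈ Sinᶜ, (Gmap μ X c ψt j - Gmap μ X c ψ j)) := by
    refine hpw.trans ?_
    apply mul_le_mul_of_nonneg_left _ hCPW.le
    refine hgradint.trans ?_
    exact mul_le_mul_of_nonneg_left hband (by positivity)
  have hfinal := hQ1.trans hQ2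
  rw [hdeneq] at hfinal hden
  set Δ : ℝ := ∑ j ∈ Sinᶜ, (Gmap μ X c ψt j - Gmap μ X c ψ j) with hΔ
  have heq : CPW * (2*Cgrad/(t - 2*a - w) * Δ) = 2 * CPW * Cgrad * Δ / (t - 2*a - w) := by
    field_simp
  rw [heq, le_div_iff₀ hden] at hfinal
  exact hfinal

lemma dvec_eq_sum (Sin : Finset (Fin N)) : dvec Sin = ∑ i ∈ Sin, Pi.single i (1:ℝ) := by
  funext k
  rw [Finset.sum_apply]
  simp only [dvec, Pi.single_apply]
  rw [Finset.sum_ite_eq Sin k (fun _ => (1:ℝ))]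

lemma deltaDeriv (μ : Measure (Euc n)) (X : Set (Euc n)) (c : Euc n → Fin N → ℝ)
    (ψ : Fin N → ℝ) (Sin : Finset (Fin N))
    (hdiff : ∀ j, DifferentiableAt ℝ (fun φ => Gmap μ X c φ j) ψ) :
    HasDerivAt (fun s : ℝ => ∑ j ∈ Sinᶜ, (Gmap μ X c (ψ + s • dvec Sin) j - Gmap μ X c ψ j))
      (∑ j ∈ Sinᶜ, fderiv ℝ (fun φ => Gmap μ X c φ j) ψ (dvec Sin)) 0 := by
  apply HasDerivAt.fun_sum
  intro j _
  have hline : HasDerivAt (fun s : ℝ => ψ + s • dvec Sin) (dvec Sin) 0 := by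
    simpa using ((hasDerivAt_id (0:ℝ)).smul_const (dvec Sin)).const_add ψ
  have h0 : ψ = ψ + (0:ℝ) • dvec Sin := by simp
  have hF : HasFDerivAt (fun φ => Gmap μ X c φ j)
      (fderiv ℝ (fun φ => Gmap μ X c φ j) ψ) (ψ + (0:ℝ) • dvec Sin) := by
    rw [← h0]; exact (hdiff j).hasFDerivAt
  have hcomp := hF.comp_hasDerivAt 0 hline
  simpa using hcomp.sub_const (Gmap μ X c ψ j)

end main

end SD

/-- **Proposition 4.4: the weighted Laguerre-cell graph is connected through edges of
weight at least `2^(1-1/q) ε^(1/q) / (C_∇ N² C_PW)`.** -/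


theorem stmt14 {n N : ℕ} (hn : 2 ≤ n) (hN : 0 < N)
    (X : Set (Euc n)) (hXcpt : IsCompact X) (hXlip : HasLipschitzBoundary X)
    (c : Euc n → Fin N → ℝ) (hreg : Reg c) (htwist : Twist X c)
    (ρ : Euc n → ℝ) (hρcont : ContinuousOn ρ X) (hρ0 : ∀ x ∉ X, ρ x = 0)
    (hρnn : ∀ x, 0 ≤ ρ x)
    (μ : Measure (Euc n)) [IsProbabilityMeasure μ]
    (hμ : μ = volume.withDensity fun x => ENNReal.ofReal (ρ x))
    (q CPW : ℝ) (hq1 : 1 ≤ q) (hq2 : q ≤ 2) (hCPW : 0 < CPW) (hPW : PWIneq μ q CPW)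
    (Cgrad : ℝ) (hCgrad : ∀ x ∈ X, ∀ i, ‖gradient (fun z => c z i) x‖ ≤ Cgrad)
    (ε : ℝ) (hε : 0 < ε)
    (ψ : Fin N → ℝ) (hψ : ∀ i, ε < Gmap μ X c ψ i)
    (hdiff : ∀ j, DifferentiableAt ℝ (fun φ => Gmap μ X c φ j) ψ)
    (hder : ∀ i j : Fin N, i ≠ j →
      fderiv ℝ (fun φ => Gmap μ X c φ j) ψ (Pi.single i 1) =
        ∫ x in Lag X c ψ i ∩ Lag X c ψ j,
          ρ x / ‖gradient (fun z => c z i) x - gradient (fun z => c z j) x‖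
            ∂(μH[(n : ℝ) - 1])) :
    (SimpleGraph.fromRel fun i j : Fin N =>
      (2 : ℝ) ^ (1 - 1 / q) * ε ^ (1 / q) / (Cgrad * N ^ 2 * CPW) ≤
        fderiv ℝ (fun φ => Gmap μ X c φ j) ψ (Pi.single i 1)).Connected := by
  classical
  haveI : Nonempty (Fin N) := Fin.pos_iff_nonempty.mp hN
  set W : Fin N → Fin N → ℝ :=
    fun i j => fderiv ℝ (fun φ => Gmap μ X c φ j) ψ (Pi.single i 1) with hW
  set τ : ℝ := (2 : ℝ) ^ (1 - 1 / q) * ε ^ (1 / q) / (Cgrad * N ^ 2 * CPW) with hτ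
  set G : SimpleGraph (Fin N) := SimpleGraph.fromRel fun i j => τ ≤ W i j with hG
  rw [SimpleGraph.connected_iff]
  refine ⟨?_, inferInstance⟩
  by_contra hncon
  rw [SimpleGraph.Preconnected] at hncon
  push_neg at hncon
  obtain ⟨u, v, huv⟩ := hncon
  set Sin : Finset (Fin N) := Finset.univ.filter (fun k => G.Reachable u k) with hSin_def
  have hu : u ∈ Sin := by
    simp only [hSin_def, Finset.mem_filter, Finset.mem_univ, true_and]
    exact SimpleGraph.Reachable.refl u
  have hv : v ∈ Sinᶜ := by
    simp only [hSin_def, Finset.mem_compl, Finset.mem_filter, Finset.mem_univ, true_and]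
    exact huv
  have hSin : Sin.Nonempty := ⟨u, hu⟩
  have hSout : Sinᶜ.Nonempty := ⟨v, hv⟩
  have hcross : ∀ i ∈ Sin, ∀ j ∈ Sinᶜ, W i j < τ := by
    intro i hi j hj
    by_contra hge
    push_neg at hge
    rw [Finset.mem_compl] at hj
    have hne : i ≠ j := by rintro rfl; exact hj hi
    have hadj : G.Adj i j := by
      rw [hG, SimpleGraph.fromRel_adj]
      exact ⟨hne, Or.inl hge⟩
    have hiR : G.Reachable u i := by
      simpa [hSin_def] using hi
    have : G.Reachable u j := hiR.trans hadj.reachable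
    rw [hSin_def] at hj
    simp only [Finset.mem_filter, Finset.mem_univ, true_and] at hj
    exact hj this
  have hμc : μ Xᶜ = 0 := SD.mu_compl_zero hXcpt.isClosed hρ0 hμ
  have hXne : X.Nonempty := by
    rw [nonempty_iff_ne_empty]
    rintro rfl
    rw [compl_empty] at hμc
    exact one_ne_zero ((measure_univ (μ := μ)).symm.trans hμc)
  obtain ⟨x0, hx0⟩ := hXne
  have hne_uv : u ≠ v := by rintro rfl; exact huv (SimpleGraph.Reachable.refl _)
  have hCg0 : 0 < Cgrad := by
    rcases lt_or_ge 0 Cgrad with h|h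
    · exact h
    exfalso
    have h1 := (hCgrad x0 hx0 u).trans h
    have h2 := (hCgrad x0 hx0 v).trans h
    rw [norm_le_zero_iff] at h1 h2
    exact htwist x0 hx0 u v hne_uv (h1.trans h2.symm)
  have hq0 : 0 < q := lt_of_lt_of_le one_pos hq1
  have hN2 : 1 < N := by
    rcases Nat.lt_or_ge N 2 with h|h
    · exfalso
      have hN1 : N = 1 := by omega
      subst hN1
      exact hne_uv (Subsingleton.elim u v)
    · omega
  -- continuity in t at 0 for the cell of u
  have hline : Continuous fun s : ℝ => ψ + s • SD.dvec Sin := by fun_prop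
  have hcontG : ContinuousAt (fun s : ℝ => Gmap μ X c (ψ + s • SD.dvec Sin) u) 0 := by
    have h1 : ContinuousAt (fun φ => Gmap μ X c φ u)
        ((fun s : ℝ => ψ + s • SD.dvec Sin) 0) := by
      have h0 : (fun s : ℝ => ψ + s • SD.dvec Sin) 0 = ψ := by simp
      rw [h0]
      exact (hdiff u).continuousAt
    show ContinuousAt ((fun φ => Gmap μ X c φ u) ∘ (fun s : ℝ => ψ + s • SD.dvec Sin)) 0
    exact ContinuousAt.comp h1 hline.continuousAt
  have hval : (fun s : ℝ => Gmap μ X c (ψ + s • SD.dvec Sin) u) 0 ∈ Ioi ε := by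
    simp only [zero_smul, add_zero]
    exact hψ u
  have hev : ∀ᶠ s : ℝ in 𝓝 0, Gmap μ X c (ψ + s • SD.dvec Sin) u ∈ Ioi ε :=
    hcontG (Ioi_mem_nhds hval)
  obtain ⟨t₀, ht₀, hball⟩ := Metric.eventually_nhds_iff.mp hev
  set C₁ : ℝ := ε ^ (1/q) * 2 ^ (1/q - 1) / (2 * CPW * Cgrad) with hC₁
  have hC₁0 : 0 < C₁ := by
    rw [hC₁]
    have h1 : (0:ℝ) < ε ^ (1/q) := Real.rpow_pos_of_pos hε _
    have h2 : (0:ℝ) < (2:ℝ) ^ (1/q - 1) := Real.rpow_pos_of_pos (by norm_num) _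
    positivity
  set Δfun : ℝ → ℝ :=
    fun s => ∑ j ∈ Sinᶜ, (Gmap μ X c (ψ + s • SD.dvec Sin) j - Gmap μ X c ψ j) with hΔf
  have hlogN : 0 < Real.log N := Real.log_pos (by exact_mod_cast hN2)
  have hkey : ∀ s : ℝ, 0 < s → s < t₀ → C₁ * s ≤ Δfun s := by
    intro s hs hst
    have hG0 : ε < Gmap μ X c (ψ + s • SD.dvec Sin) u := by
      have := hball (y := s) (by rw [Real.dist_eq, sub_zero, abs_of_pos hs]; exact hst)
      exact this
    by_contra hlt
    push_neg at hlt
    set δ : ℝ := (C₁ * s - Δfun s) / C₁ with hδ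
    have hδ0 : 0 < δ := div_pos (by linarith) hC₁0
    set w : ℝ := min (δ/2) (s/8) with hwdef
    set η : ℝ := min (δ/8) (s/8) / Real.log N with hηdef
    have hw0 : 0 < w := lt_min (by linarith) (by linarith)
    have hη0 : 0 < η := div_pos (lt_min (by linarith) (by linarith)) hlogN
    have haeq : η * Real.log N = min (δ/8) (s/8) := by
      rw [hηdef]
      field_simp
    have hA1 : η * Real.log N ≤ δ/8 := haeq.le.trans (min_le_left _ _)
    have hA2 : η * Real.log N ≤ s/8 := haeq.le.trans (min_le_right _ _)
    have hw1 : w ≤ δ/2 := min_le_left _ _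
    have hw2 : w ≤ s/8 := min_le_right _ _
    have hplateau : 2 * (η * Real.log N) + 2 * w ≤ s := by linarith
    have hmaster := SD.master hXcpt hreg hρ0 hμ hq1 hCPW hPW hCgrad hCg0 hε hSin hSout
      hu hv hs hη0 hw0 hplateau (hψ v) hG0
    have h2cg : (0:ℝ) < 2 * CPW * Cgrad := by positivity
    have hm2 : C₁ * (s - 2*(η * Real.log N) - w) ≤ Δfun s := by
      rw [hC₁, div_mul_eq_mul_div, div_le_iff₀ h2cg]
      calc ε ^ (1/q) * 2 ^ (1/q - 1) * (s - 2*(η * Real.log N) - w)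
          ≤ 2 * CPW * Cgrad *
              ∑ j ∈ Sinᶜ, (Gmap μ X c (ψ + s • SD.dvec Sin) j - Gmap μ X c ψ j) := hmaster
        _ = Δfun s * (2 * CPW * Cgrad) := by rw [hΔf]; ring
    have hgt : C₁ * (s - δ) < C₁ * (s - 2*(η * Real.log N) - w) := by
      apply mul_lt_mul_of_pos_left _ hC₁0
      linarith
    have hΔeq : C₁ * (s - δ) = Δfun s := by
      rw [hδ]
      field_simp
      ring
    linarith
  have hDer := SD.deltaDeriv μ X c ψ Sin hdiff
  set D : ℝ := ∑ j ∈ Sinᶜ, fderiv ℝ (fun φ => Gmap μ X c φ j) ψ (SD.dvec Sin) with hD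
  have hΔ0 : Δfun 0 = 0 := by simp [hΔf]
  have hslope : Tendsto (fun s => Δfun s / s) (𝓝[>] (0:ℝ)) (𝓝 D) := by
    have h1 := hasDerivAt_iff_tendsto_slope.mp hDer
    have h2 : (𝓝[>] (0:ℝ)) ≤ 𝓝[≠] (0:ℝ) :=
      nhdsWithin_mono 0 fun y hy => ne_of_gt hy
    have h3 := h1.mono_left h2
    apply h3.congr
    intro s
    have hsplit : Δfun s = ∑ j ∈ Sinᶜ, Gmap μ X c (ψ + s • SD.dvec Sin) j
        - ∑ j ∈ Sinᶜ, Gmap μ X c ψ j := by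
      rw [hΔf]
      exact Finset.sum_sub_distrib _ _
    simp [slope_def_field, hΔ0, Finset.sum_sub_distrib, hsplit]
  have hC₁D : C₁ ≤ D := by
    apply ge_of_tendsto hslope
    filter_upwards [Ioo_mem_nhdsGT_of_mem (Set.mem_Ico.mpr ⟨le_rfl, ht₀⟩)] with s hs
    rw [le_div_iff₀ hs.1]
    exact hkey s hs.1 hs.2
  have hτ0 : 0 < τ := by
    rw [hτ]
    have h1 : (0:ℝ) < ε ^ (1/q) := Real.rpow_pos_of_pos hε _
    have h2 : (0:ℝ) < (2:ℝ) ^ (1 - 1/q) := Real.rpow_pos_of_pos (by norm_num) _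
    have h3 : (0:ℝ) < (N:ℝ) := by exact_mod_cast hN
    positivity
  have hDlt : D < τ * (Sinᶜ.card * Sin.card) := by
    rw [hD]
    have hterm : ∀ j ∈ Sinᶜ,
        fderiv ℝ (fun φ => Gmap μ X c φ j) ψ (SD.dvec Sin) < τ * Sin.card := by
      intro j hj
      rw [SD.dvec_eq_sum, map_sum]
      calc ∑ i ∈ Sin, fderiv ℝ (fun φ => Gmap μ X c φ j) ψ (Pi.single i 1)
          < ∑ _i ∈ Sin, τ :=
            Finset.sum_lt_sum_of_nonempty hSin fun i hi => hcross i hi j hj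
        _ = τ * Sin.card := by rw [Finset.sum_const, nsmul_eq_mul, mul_comm]
    calc ∑ j ∈ Sinᶜ, fderiv ℝ (fun φ => Gmap μ X c φ j) ψ (SD.dvec Sin)
        < ∑ _j ∈ Sinᶜ, τ * Sin.card := Finset.sum_lt_sum_of_nonempty hSout hterm
      _ = τ * (Sinᶜ.card * Sin.card) := by rw [Finset.sum_const, nsmul_eq_mul]; ring
  have hcards : (Sinᶜ.card : ℝ) * Sin.card ≤ (N:ℝ)^2 / 4 := by
    have hsum : (Sin.card : ℝ) + Sinᶜ.card = N := by
      have h1 := Finset.card_add_card_compl Sin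
      rw [Fintype.card_fin] at h1
      exact_mod_cast h1
    nlinarith [sq_nonneg ((Sin.card:ℝ) - Sinᶜ.card)]
  have hcomp : τ * ((N:ℝ)^2/4) ≤ C₁ := by
    rw [hτ, hC₁]
    have hNpos : (0:ℝ) < (N:ℝ) := by exact_mod_cast hN
    have hq2' : (2:ℝ)^(1 - 1/q) ≤ 2^(1/q) := by
      apply (Real.rpow_le_rpow_left_iff (by norm_num : (1:ℝ) < 2)).mpr
      have h12 : (1:ℝ)/2 ≤ 1/q := one_div_le_one_div_of_le hq0 hq2
      linarith
    have hA : (2:ℝ)^(1-1/q) * ε^(1/q) / (Cgrad * (N:ℝ)^2 * CPW) * ((N:ℝ)^2/4)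
        = 2^(1-1/q) * ε^(1/q) / (4 * Cgrad * CPW) := by
      field_simp
    rw [hA, div_le_div_iff₀ (by positivity) (by positivity)]
    have h2 : (2:ℝ)^(1/q) = 2^(1/q-1) * 2 := by
      rw [← Real.rpow_add_one (by norm_num : (2:ℝ) ≠ 0) (1/q - 1)]
      norm_num
    calc (2:ℝ)^(1-1/q) * ε^(1/q) * (2 * CPW * Cgrad)
        ≤ 2^(1/q) * ε^(1/q) * (2 * CPW * Cgrad) := by
          apply mul_le_mul_of_nonneg_right
            (mul_le_mul_of_nonneg_right hq2' (Real.rpow_nonneg hε.le _)) (by positivity)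
      _ = ε^(1/q) * 2^(1/q-1) * (4 * Cgrad * CPW) := by rw [h2]; ring
  have hfin : D < C₁ :=
    hDlt.trans_le ((mul_le_mul_of_nonneg_left hcards hτ0.le).trans hcomp)
  linarith
end
end

section
/- Let n ≥ 2 and let A ⊂ ℝⁿ be a bounded convex set with ℒ(A) > 0. Then A contains a closed ball of radius 2^{n−1} ℒ(A) / (ω_n (n+2)^n diam(A)^{n−1}). -/
open MeasureTheory Metric Set Filter Bornology
open scoped RealInnerProductSpace ENNReal NNReal Topology symmDiff

noncomputable section

lemma slab_bound {n : ℕ} (hn : 0 < n) (K : Set (Euc n)) (u a₀ : Euc n) (hu : ‖u‖ = 1)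
    (D m M : ℝ) (hdist : ∀ x ∈ K, dist x a₀ ≤ D)
    (hm : ∀ x ∈ K, m ≤ ⟪u, x⟫) (hM : ∀ x ∈ K, ⟪u, x⟫ ≤ M) :
    volume K ≤ ENNReal.ofReal (M - m) * ENNReal.ofReal (2 * D) ^ (n - 1) := by
  classical
  set i0 : Fin n := ⟨0, hn⟩ with hi0
  have hcard : Module.finrank ℝ (Euc n) = Fintype.card (Fin n) := by
    simp [finrank_euclideanSpace_fin]
  have horth : Orthonormal ℝ (Set.restrict {i0} (fun _ : Fin n => u)) := by
    constructor
    · intro i; exact hu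
    · intro i j hij
      exact absurd (Subtype.ext (by
        have h1 := i.2; have h2 := j.2
        simp only [Set.mem_singleton_iff] at h1 h2
        rw [h1, h2])) hij
  obtain ⟨b, hb⟩ := horth.exists_orthonormalBasis_extension_of_card_eq hcard
  have hbi0 : b i0 = u := hb i0 rfl
  set lo : Fin n → ℝ := fun i => if i = i0 then m else ⟪b i, a₀⟫ - D with hlo
  set hhi : Fin n → ℝ := fun i => if i = i0 then M else ⟪b i, a₀⟫ + D with hhi'
  set Box : Set (Fin n → ℝ) := Set.univ.pi fun i => Icc (lo i) (hhi i) with hBox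
  set T : Euc n → (Fin n → ℝ) := fun x => ((MeasurableEquiv.toLp 2 (Fin n → ℝ)).symm) (b.repr x)
    with hT
  have hmp : MeasurePreserving T volume volume :=
    (EuclideanSpace.volume_preserving_symm_measurableEquiv_toLp _).comp b.measurePreserving_repr
  have hTx : ∀ (x : Euc n) (i : Fin n), T x i = ⟪b i, x⟫ := by
    intro x i
    exact b.repr_apply_apply x i
  have hsub : K ⊆ T ⁻¹' Box := by
    intro x hx
    intro i _
    rw [hTx x i]
    by_cases h : i = i0
    · subst h
      rw [hbi0]
      simp only [hlo, hhi', if_pos rfl, mem_Icc]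
      exact ⟨hm x hx, hM x hx⟩
    · simp only [hlo, hhi', if_neg h, mem_Icc]
      have h1 : |⟪b i, x⟫ - ⟪b i, a₀⟫| ≤ D := by
        rw [← inner_sub_right]
        calc |⟪b i, x - a₀⟫| ≤ ‖b i‖ * ‖x - a₀‖ := abs_real_inner_le_norm _ _
        _ = ‖x - a₀‖ := by rw [b.orthonormal.1 i]; ring
        _ ≤ D := by rw [← dist_eq_norm]; exact hdist x hx
      have := abs_le.mp h1
      constructor <;> linarith [this.1, this.2]
  have hBoxmeas : MeasurableSet Box := MeasurableSet.univ_pi fun i => measurableSet_Icc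
  calc volume K ≤ volume (T ⁻¹' Box) := measure_mono hsub
    _ = volume Box := hmp.measure_preimage hBoxmeas.nullMeasurableSet
    _ = ∏ i, ENNReal.ofReal (hhi i - lo i) := by
        rw [hBox, volume_pi_pi]
        exact Finset.prod_congr rfl fun i _ => Real.volume_Icc
    _ = ENNReal.ofReal (M - m) * ENNReal.ofReal (2 * D) ^ (n - 1) := by
        rw [← Finset.mul_prod_erase Finset.univ _ (Finset.mem_univ i0)]
        have h2 : ∀ i ∈ Finset.univ.erase i0,
            ENNReal.ofReal (hhi i - lo i) = ENNReal.ofReal (2 * D) := by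
          intro i hi
          have h : i ≠ i0 := Finset.ne_of_mem_erase hi
          simp only [hlo, hhi', if_neg h]
          congr 1
          ring
        rw [Finset.prod_congr rfl h2, Finset.prod_const,
          Finset.card_erase_of_mem (Finset.mem_univ i0), Finset.card_univ, Fintype.card_fin]
        simp only [hlo, hhi', if_pos rfl]

lemma omega_lower {n : ℕ} (hn : 1 ≤ n) :
    ((2:ℝ) / Real.sqrt n) ^ n ≤ Real.pi ^ ((n:ℝ)/2) / Real.Gamma ((n:ℝ)/2 + 1) := by
  haveI : Nonempty (Fin n) := ⟨⟨0, hn⟩⟩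
  have hnpos : (0:ℝ) < n := by exact_mod_cast hn
  have hsq : (0:ℝ) < Real.sqrt n := Real.sqrt_pos.2 hnpos
  set a : ℝ := (Real.sqrt n)⁻¹ with ha
  have ha0 : 0 < a := by positivity
  set C : Set (Euc n) :=
    ((MeasurableEquiv.toLp 2 (Fin n → ℝ)).symm) ⁻¹' (Set.univ.pi fun _ => Icc (-a) a) with hC
  have hCb : C ⊆ closedBall (0 : Euc n) 1 := by
    intro x hx
    rw [mem_closedBall_zero_iff]
    have hxi : ∀ i : Fin n, |x i| ≤ a := by
      intro i
      have := hx i (Set.mem_univ i)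
      rw [abs_le]
      exact ⟨this.1, this.2⟩
    rw [EuclideanSpace.norm_eq]
    rw [show (1:ℝ) = Real.sqrt 1 by simp]
    apply Real.sqrt_le_sqrt
    calc ∑ i, ‖x i‖ ^ 2 ≤ ∑ _i : Fin n, a ^ 2 := by
          apply Finset.sum_le_sum
          intro i _
          have : ‖x i‖ ≤ a := by rw [Real.norm_eq_abs]; exact hxi i
          exact pow_le_pow_left₀ (norm_nonneg _) this 2
      _ = n * a ^ 2 := by rw [Finset.sum_const, Finset.card_univ, Fintype.card_fin]; ring
      _ = 1 := by
          rw [ha, inv_pow, Real.sq_sqrt hnpos.le]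
          field_simp
  have hCv : volume C = ENNReal.ofReal ((2*a)^n) := by
    rw [hC, MeasurePreserving.measure_preimage
      (EuclideanSpace.volume_preserving_symm_measurableEquiv_toLp (Fin n))
      ((MeasurableSet.univ_pi fun _ => measurableSet_Icc).nullMeasurableSet)]
    rw [volume_pi_pi]
    simp only [Real.volume_Icc]
    rw [Finset.prod_const, Finset.card_univ, Fintype.card_fin, ← ENNReal.ofReal_pow (by linarith)]
    congr 1
    ring
  have hball := EuclideanSpace.volume_closedBall (Fin n) (0 : Euc n) 1
  have hmono : volume C ≤ volume (closedBall (0 : Euc n) 1) := measure_mono hCb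
  rw [hCv, hball] at hmono
  simp only [ENNReal.ofReal_one, one_pow, one_mul, Fintype.card_fin] at hmono
  have hΓ : 0 < Real.Gamma ((n:ℝ)/2 + 1) := Real.Gamma_pos_of_pos (by positivity)
  have hreal : (2*a)^n ≤ Real.sqrt Real.pi ^ n / Real.Gamma ((n:ℝ)/2 + 1) := by
    rw [← ENNReal.ofReal_le_ofReal_iff (by positivity)]
    exact hmono
  have hpi : (Real.sqrt Real.pi) ^ n = Real.pi ^ ((n:ℝ)/2) := by
    rw [Real.sqrt_eq_rpow, ← Real.rpow_natCast (Real.pi ^ ((1:ℝ)/2)) n,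
      ← Real.rpow_mul Real.pi_pos.le]
    congr 1 <;> ring
  rw [← hpi]
  calc ((2:ℝ) / Real.sqrt n) ^ n = (2*a)^n := by rw [ha, div_eq_mul_inv]
    _ ≤ _ := hreal

lemma star_ineq {n : ℕ} (hn : 2 ≤ n) :
    (4:ℝ)^(n-1) * ((n:ℝ)+1) <
      (Real.pi ^ ((n:ℝ)/2) / Real.Gamma ((n:ℝ)/2 + 1)) * ((n:ℝ)+2)^n := by
  have h1 := omega_lower (le_trans one_le_two hn)
  set s := Real.sqrt n with hs
  have hnpos : (0:ℝ) < n := by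
    have : (0:ℕ) < n := by omega
    exact_mod_cast this
  have hspos : 0 < s := Real.sqrt_pos.2 hnpos
  have hs2 : s^2 = n := Real.sq_sqrt hnpos.le
  set ω := Real.pi ^ ((n:ℝ)/2) / Real.Gamma ((n:ℝ)/2 + 1) with hω
  have hstep : (4:ℝ)^(n-1) * ((n:ℝ)+1) < (2/s)^n * ((n:ℝ)+2)^n := by
    have hrw : ((2:ℝ)/s)^n * ((n:ℝ)+2)^n = (4 * (((n:ℝ)+2)/(2*s)))^n := by
      rw [← mul_pow]
      congr 1
      field_simp
      ring
    set q : ℝ := ((n:ℝ)+2)/(2*s) with hq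
    have hq1 : 1 ≤ q := by
      rw [hq, le_div_iff₀ (by positivity)]
      nlinarith [sq_nonneg (s-1)]
    have hqn : q^2 ≤ q^n := pow_le_pow_right₀ hq1 hn
    have h4 : ((4:ℝ)*q)^n = 4^n * q^n := mul_pow 4 q n
    have h4n : (4:ℝ)^n = 4 * 4^(n-1) := by
      have h : (4:ℝ)^n = 4^(n-1+1) := by congr 1; omega
      rw [h, pow_succ]
      ring
    have hq2 : 4 * q^2 = ((n:ℝ)+2)^2 / n := by
      rw [hq]
      rw [div_pow]
      rw [mul_pow]
      rw [hs2]
      field_simp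
      ring
    have hlast : (4:ℝ)^(n-1) * ((n:ℝ)+1) < 4^(n-1) * (((n:ℝ)+2)^2 / n) := by
      apply mul_lt_mul_of_pos_left _ (by positivity)
      rw [lt_div_iff₀ hnpos]
      nlinarith
    calc (4:ℝ)^(n-1) * ((n:ℝ)+1) < 4^(n-1) * (((n:ℝ)+2)^2 / n) := hlast
      _ = 4^(n-1) * (4 * q^2) := by rw [hq2]
      _ = 4^n * q^2 := by rw [h4n]; ring
      _ ≤ 4^n * q^n := by
          apply mul_le_mul_of_nonneg_left hqn (by positivity)
      _ = ((4:ℝ)*q)^n := (mul_pow 4 q n).symm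
      _ = (2/s)^n * ((n:ℝ)+2)^n := hrw.symm
  calc (4:ℝ)^(n-1) * ((n:ℝ)+1) < (2/s)^n * ((n:ℝ)+2)^n := hstep
    _ ≤ ω * ((n:ℝ)+2)^n := by
        apply mul_le_mul_of_nonneg_right h1 (by positivity)

set_option maxHeartbeats 1000000 in
lemma grunbaum {n : ℕ} (hn : 0 < n) (K : Set (Euc n)) (hK : Convex ℝ K) (hKc : IsCompact K)
    (hV : 0 < volume K) (u : Euc n) (hu : ‖u‖ = 1) (c : ℝ) (hc : ∀ x ∈ K, ⟪u, x⟫ ≤ c) :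
    ⟪u, (volume K).toReal⁻¹ • ∫ x in K, x⟫
      + (volume K).toReal / (((n:ℝ)+1) * (2 * diam K) ^ (n-1)) ≤ c := by
  have hne : K.Nonempty := nonempty_of_measure_ne_zero hV.ne'
  have hKm : MeasurableSet K := hKc.isClosed.measurableSet
  have hVfin : volume K ≠ ⊤ := hKc.measure_lt_top.ne
  set V := (volume K).toReal with hVdef
  have hV0 : 0 < V := ENNReal.toReal_pos hV.ne' hVfin
  have hLcont : Continuous (fun x : Euc n => ⟪u, x⟫) := continuous_const.inner continuous_id
  obtain ⟨xM, hxM, hxMmax'⟩ := hKc.exists_isMaxOn hne hLcont.continuousOn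
  have hxMmax : ∀ y ∈ K, ⟪u, y⟫ ≤ ⟪u, xM⟫ := fun y hy => hxMmax' hy
  obtain ⟨xm, hxm, hxmmin'⟩ := hKc.exists_isMinOn hne hLcont.continuousOn
  have hxmmin : ∀ y ∈ K, ⟪u, xm⟫ ≤ ⟪u, y⟫ := fun y hy => hxmmin' hy
  set m := ⟪u, xm⟫ with hmdef
  set M := ⟪u, xM⟫ with hMdef
  set w := M - m with hwdef
  have hw0 : 0 ≤ w := sub_nonneg.2 (hxmmin xM hxM)
  set D := diam K with hDdef
  have hD0 : 0 ≤ D := diam_nonneg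
  have hslab := slab_bound hn K u xm hu D m M
    (fun x hx => dist_le_diam_of_mem hKc.isBounded hx hxm)
    (fun x hx => hxmmin x hx) (fun x hx => hxMmax x hx)
  have hslabR : V ≤ w * (2*D)^(n-1) := by
    have h1 : volume K ≤ ENNReal.ofReal (w * (2*D)^(n-1)) := by
      rw [ENNReal.ofReal_mul hw0, ENNReal.ofReal_pow (by positivity)]
      exact hslab
    exact ENNReal.toReal_le_of_le_ofReal (by positivity) h1
  have hw : 0 < w := by
    rcases lt_or_eq_of_le hw0 with h | h
    · exact h
    · exfalso
      rw [← h] at hslabR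
      simp at hslabR
      linarith
  have hD : 0 < D := by
    have hne' : xM ≠ xm := by
      intro he
      have : w = 0 := by rw [hwdef, hMdef, hmdef, he, sub_self]
      linarith
    calc (0:ℝ) < dist xM xm := dist_pos.2 hne'
      _ ≤ D := dist_le_diam_of_mem hKc.isBounded hxM hxm
  set μ := volume.restrict K with hμdef
  set g : Euc n → ℝ := fun x => M - ⟪u, x⟫ with hgdef
  have hgc : Continuous g := continuous_const.sub hLcont
  have hgnn : 0 ≤ᵐ[μ] g :=
    (ae_restrict_iff' hKm).mpr (ae_of_all _ fun x hx => sub_nonneg.2 (hxMmax x hx))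
  have hlayer := lintegral_eq_lintegral_meas_le μ hgnn hgc.aemeasurable
  -- pointwise tail bound
  have hpt : ∀ t ∈ Ioo (0:ℝ) w,
      ENNReal.ofReal ((1 - t/w)^n) * volume K ≤ μ {a | t ≤ g a} := by
    intro t ht
    set τ := 1 - t/w with hτ
    have hτ0 : 0 ≤ τ := by
      rw [hτ, sub_nonneg, div_le_one hw]
      exact ht.2.le
    have hτ1 : τ ≤ 1 := by
      have : 0 ≤ t/w := div_nonneg ht.1.le hw.le
      rw [hτ]; linarith
    have himg : (AffineMap.homothety xm τ) '' K ⊆ {a | t ≤ g a} ∩ K := by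
      rintro _ ⟨x, hx, rfl⟩
      have hhom : AffineMap.homothety xm τ x = τ • x + (1-τ) • xm := by
        simp only [AffineMap.homothety_apply, vsub_eq_sub, vadd_eq_add]
        module
      constructor
      · show t ≤ g (AffineMap.homothety xm τ x)
        rw [hgdef]
        simp only
        rw [hhom, inner_add_right, real_inner_smul_right, real_inner_smul_right]
        have h1 : ⟪u,x⟫ ≤ M := hxMmax x hx
        have h2 : τ * ⟪u,x⟫ ≤ τ * M := mul_le_mul_of_nonneg_left h1 hτ0
        have ht2 : t = (1-τ) * w := by rw [hτ]; field_simp; ring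
        rw [ht2, hwdef]
        nlinarith
      · rw [hhom]
        exact hK hx hxm hτ0 (by linarith) (by ring)
    have hSm : MeasurableSet {a : Euc n | t ≤ g a} :=
      measurableSet_le measurable_const hgc.measurable
    have hμr : μ {a | t ≤ g a} = volume ({a | t ≤ g a} ∩ K) := Measure.restrict_apply hSm
    have himgvol : volume ((AffineMap.homothety xm τ) '' K)
        = ENNReal.ofReal ((1 - t/w)^n) * volume K := by
      rw [Measure.addHaar_image_homothety]
      congr 2
      rw [finrank_euclideanSpace_fin, abs_of_nonneg (pow_nonneg hτ0 n)]
    rw [hμr, ← himgvol]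
    exact measure_mono himg
  -- tail function measurable
  have hmeas_tail : Measurable (fun t : ℝ => μ {a | t ≤ g a}) := by
    apply Antitone.measurable
    intro s t hst
    exact measure_mono (fun a ha => le_trans hst ha)
  have hfcont : Continuous (fun t : ℝ => (1 - t/w)^n) :=
    (continuous_const.sub (continuous_id.div_const w)).pow n
  have hfmeas : Measurable (fun t : ℝ => ENNReal.ofReal ((1 - t/w)^n)) :=
    ENNReal.measurable_ofReal.comp hfcont.measurable
  have hIoo1 : ∫⁻ t in Ioo (0:ℝ) w, ENNReal.ofReal ((1 - t/w)^n) * volume K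
      ≤ ∫⁻ t in Ioi (0:ℝ), μ {a | t ≤ g a} := by
    calc ∫⁻ t in Ioo (0:ℝ) w, ENNReal.ofReal ((1 - t/w)^n) * volume K
        ≤ ∫⁻ t in Ioo (0:ℝ) w, μ {a | t ≤ g a} := setLIntegral_mono hmeas_tail hpt
      _ ≤ ∫⁻ t in Ioi (0:ℝ), μ {a | t ≤ g a} := lintegral_mono_set Ioo_subset_Ioi_self
  have hint : IntegrableOn (fun t : ℝ => (1 - t/w)^n) (Ioo 0 w) volume :=
    (hfcont.integrableOn_Icc).mono_set Ioo_subset_Icc_self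
  have hnn2 : 0 ≤ᵐ[volume.restrict (Ioo (0:ℝ) w)] (fun t : ℝ => (1 - t/w)^n) := by
    filter_upwards [ae_restrict_mem measurableSet_Ioo] with t ht
    have h1 : t/w ≤ 1 := by rw [div_le_one hw]; exact ht.2.le
    exact pow_nonneg (by linarith) n
  have hIval : ∫ t in Ioo (0:ℝ) w, (1 - t/w)^n = w / ((n:ℝ)+1) := by
    rw [← integral_Ioc_eq_integral_Ioo, ← intervalIntegral.integral_of_le hw.le]
    have hderiv : ∀ t ∈ uIcc (0:ℝ) w,
        HasDerivAt (fun t : ℝ => -(w/((n:ℝ)+1)) * (1-t/w)^(n+1)) ((1-t/w)^n) t := by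
      intro t _
      have h1 : HasDerivAt (fun t : ℝ => 1 - t/w) (-(1/w)) t := by
        simpa using ((hasDerivAt_id t).div_const w).const_sub 1
      have h2 := (h1.pow (n+1)).const_mul (-(w/((n:ℝ)+1)))
      have : ((n:ℝ)+1) ≠ 0 := by positivity
      refine h2.congr_deriv ?_
      push_cast
      linear_combination ((1 - t/w)^n * ((n:ℝ)+1) * ((n:ℝ)+1)⁻¹) * (mul_inv_cancel₀ hw.ne') + (1 - t/w)^n * (mul_inv_cancel₀ this)
    rw [intervalIntegral.integral_eq_sub_of_hasDerivAt hderiv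
      (hfcont.intervalIntegrable 0 w)]
    rw [div_self hw.ne']
    simp only [sub_self, zero_div, sub_zero, one_pow, mul_one]
    rw [zero_pow (Nat.succ_ne_zero n)]
    ring
  have hconst : ∫⁻ t in Ioo (0:ℝ) w, ENNReal.ofReal ((1 - t/w)^n) * volume K
      = ENNReal.ofReal (w/((n:ℝ)+1)) * volume K := by
    rw [lintegral_mul_const _ hfmeas]
    congr 1
    rw [← ofReal_integral_eq_lintegral_ofReal hint hnn2, hIval]
  have hCore : ENNReal.ofReal (w/((n:ℝ)+1)) * volume K ≤ ∫⁻ x, ENNReal.ofReal (g x) ∂μ := by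
    rw [hlayer, ← hconst]
    exact hIoo1
  have hgint : IntegrableOn g K volume := hgc.continuousOn.integrableOn_compact hKc
  have hlhs : ∫⁻ x, ENNReal.ofReal (g x) ∂μ = ENNReal.ofReal (∫ x in K, g x) :=
    (ofReal_integral_eq_lintegral_ofReal hgint hgnn).symm
  have hgnonneg : 0 ≤ ∫ x in K, g x :=
    setIntegral_nonneg hKm fun x hx => sub_nonneg.2 (hxMmax x hx)
  have hreal1 : w/((n:ℝ)+1) * V ≤ ∫ x in K, g x := by
    have h1 := hCore
    rw [hlhs] at h1
    have h2 : ENNReal.ofReal (w/((n:ℝ)+1) * V) ≤ ENNReal.ofReal (∫ x in K, g x) := by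
      calc ENNReal.ofReal (w/((n:ℝ)+1) * V)
          = ENNReal.ofReal (w/((n:ℝ)+1)) * ENNReal.ofReal V :=
            ENNReal.ofReal_mul (by positivity)
        _ = ENNReal.ofReal (w/((n:ℝ)+1)) * volume K := by
            rw [hVdef, ENNReal.ofReal_toReal hVfin]
        _ ≤ _ := h1
    exact (ENNReal.ofReal_le_ofReal_iff hgnonneg).mp h2
  have hid : IntegrableOn (fun x : Euc n => x) K volume :=
    continuousOn_id.integrableOn_compact hKc
  have hinner_int : IntegrableOn (fun x : Euc n => ⟪u, x⟫) K volume := by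
    have h := ContinuousLinearMap.integrable_comp (innerSL ℝ u) hid
    simpa [IntegrableOn] using h
  have hsplit : ∫ x in K, g x = M * V - ⟪u, ∫ x in K, x⟫ := by
    rw [hgdef]
    rw [integral_sub (integrableOn_const (C := M) hKc.measure_lt_top.ne) hinner_int]
    congr 1
    · rw [setIntegral_const, smul_eq_mul, hVdef, measureReal_def]; ring
    · have h := ContinuousLinearMap.integral_comp_comm (innerSL ℝ u) hid
      simpa using h
  have hbval : ⟪u, ∫ x in K, x⟫ = V * ⟪u, V⁻¹ • ∫ x in K, x⟫ := by
    rw [real_inner_smul_right]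
    field_simp
  have hM_le : M ≤ c := hc xM hxM
  have hdiv : V / (((n:ℝ)+1) * (2*D)^(n-1)) ≤ w/((n:ℝ)+1) := by
    rw [div_le_div_iff₀ (by positivity) (by positivity)]
    calc V * ((n:ℝ)+1) ≤ (w * (2*D)^(n-1)) * ((n:ℝ)+1) := by
          apply mul_le_mul_of_nonneg_right hslabR (by positivity)
      _ = w * (((n:ℝ)+1) * (2*D)^(n-1)) := by ring
  have hfin : w/((n:ℝ)+1) ≤ M - ⟪u, V⁻¹ • ∫ x in K, x⟫ := by
    have h3 : w/((n:ℝ)+1) * V ≤ M*V - V * ⟪u, V⁻¹ • ∫ x in K, x⟫ := by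
      rw [← hbval, ← hsplit]; exact hreal1
    nlinarith [h3, hV0]
  linarith [hdiv, hfin, hM_le]

set_option maxHeartbeats 1000000 in
/-- **Lemma 5.3: a bounded convex set of positive volume contains a ball of
explicit radius.** -/
theorem stmt16 {n : ℕ} (hn : 2 ≤ n)
    (A : Set (Euc n)) (hA : Convex ℝ A) (hAbd : IsBounded A)
    (hpos : 0 < (volume A).toReal) :
    ∃ z : Euc n, closedBall z
        ((2 : ℝ) ^ (n - 1) * (volume A).toReal /
          ((Real.pi ^ ((n : ℝ) / 2) / Real.Gamma ((n : ℝ) / 2 + 1)) *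
            ((n : ℝ) + 2) ^ n * Metric.diam A ^ (n - 1))) ⊆ A := by
  set K := closure A with hKdef
  have hKconv : Convex ℝ K := hA.closure
  have hKcomp : IsCompact K := hAbd.isCompact_closure
  have hAne : A.Nonempty := by
    rcases eq_empty_or_nonempty A with h | h
    · exfalso; rw [h] at hpos; simp at hpos
    · exact h
  have hfr : volume (frontier A) = 0 := hA.addHaar_frontier volume
  have hclosub : K ⊆ A ∪ frontier A := by
    intro x hx
    by_cases hxA : x ∈ A
    · exact Or.inl hxA
    · exact Or.inr ⟨hx, fun h => hxA (interior_subset h)⟩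
  have hvolK : volume K = volume A := by
    apply le_antisymm
    · calc volume K ≤ volume (A ∪ frontier A) := measure_mono hclosub
        _ ≤ volume A + volume (frontier A) := measure_union_le _ _
        _ = volume A := by rw [hfr, add_zero]
    · exact measure_mono subset_closure
  have hApos : 0 < volume A := by
    rcases (eq_or_ne (volume A) 0) with h | h
    · rw [h] at hpos; simp at hpos
    · exact pos_iff_ne_zero.mpr h
  have hVpos : 0 < volume K := by rw [hvolK]; exact hApos
  set V := (volume A).toReal with hVdef
  have hVKtoReal : (volume K).toReal = V := by rw [hvolK]
  have hint : (interior A).Nonempty := by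
    by_contra h
    rw [Set.not_nonempty_iff_eq_empty] at h
    have hspan : affineSpan ℝ A ≠ ⊤ := by
      intro htop
      rw [← hA.interior_nonempty_iff_affineSpan_eq_top] at htop
      rw [h] at htop
      exact Set.not_nonempty_empty htop
    have h0 : volume (affineSpan ℝ A : Set (Euc n)) = 0 :=
      Measure.addHaar_affineSubspace volume _ hspan
    have hA0 : volume A = 0 := measure_mono_null (subset_affineSpan ℝ A) h0
    rw [hA0] at hApos
    exact lt_irrefl _ hApos
  obtain ⟨z, hz⟩ := hint
  set D := diam A with hDdef
  have hDK : diam K = D := Metric.diam_closure A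
  have hD0 : 0 < D := by
    obtain ⟨ε, hε, hballz⟩ := Metric.isOpen_iff.mp isOpen_interior z hz
    set p := z + (ε/2) • EuclideanSpace.single (⟨0, by omega⟩ : Fin n) (1:ℝ) with hp
    have hpz : dist p z = ε/2 := by
      rw [hp, dist_eq_norm, add_sub_cancel_left, norm_smul, EuclideanSpace.norm_single]
      rw [norm_one, mul_one, Real.norm_eq_abs, abs_of_pos (by linarith : (0:ℝ) < ε/2)]
    have hpA : p ∈ A := interior_subset (hballz (by rw [mem_ball, hpz]; linarith))
    calc (0:ℝ) < ε/2 := by linarith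
      _ = dist p z := hpz.symm
      _ ≤ D := dist_le_diam_of_mem hAbd hpA (interior_subset hz)
  set ω := Real.pi ^ ((n:ℝ)/2) / Real.Gamma ((n:ℝ)/2 + 1) with hω
  have hωpos : 0 < ω :=
    div_pos (Real.rpow_pos_of_pos Real.pi_pos _) (Real.Gamma_pos_of_pos (by positivity))
  set r₀ := (2:ℝ)^(n-1) * V / (ω * ((n:ℝ)+2)^n * D^(n-1)) with hr₀
  set r := V / (((n:ℝ)+1) * (2*D)^(n-1)) with hr
  have hVpos' : 0 < V := hpos
  have hr₀pos : 0 < r₀ := by rw [hr₀]; positivity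
  have hr₀r : r₀ < r := by
    rw [hr₀, hr, div_lt_div_iff₀ (by positivity) (by positivity)]
    have h2D : (2*D)^(n-1) = 2^(n-1) * D^(n-1) := mul_pow 2 D (n-1)
    rw [h2D]
    have hstar := star_ineq hn
    have h4 : (2:ℝ)^(n-1) * 2^(n-1) = 4^(n-1) := by rw [← mul_pow]; norm_num
    calc (2:ℝ)^(n-1) * V * (((n:ℝ)+1) * (2^(n-1) * D^(n-1)))
        = (V * D^(n-1)) * ((2:ℝ)^(n-1) * 2^(n-1) * ((n:ℝ)+1)) := by ring
      _ = (V * D^(n-1)) * (4^(n-1) * ((n:ℝ)+1)) := by rw [h4]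
      _ < (V * D^(n-1)) * (ω * ((n:ℝ)+2)^n) := by
          apply mul_lt_mul_of_pos_left hstar (by positivity)
      _ = V * (ω * ((n:ℝ)+2)^n * D^(n-1)) := by ring
  set b := (volume K).toReal⁻¹ • ∫ x in K, x with hb
  have hball : ∀ p : Euc n, dist p b < r → p ∈ K := by
    intro p hp
    by_contra hpK
    obtain ⟨f, s, hfs, hsf⟩ := geometric_hahn_banach_closed_point hKconv isClosed_closure hpK
    set v := (InnerProductSpace.toDual ℝ (Euc n)).symm f with hv
    have hfv : ∀ x : Euc n, f x = ⟪v, x⟫ := fun x =>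
      (InnerProductSpace.toDual_symm_apply).symm
    obtain ⟨a₀, ha₀⟩ := hAne
    have ha₀K : a₀ ∈ K := subset_closure ha₀
    have hvne : v ≠ 0 := by
      intro h0
      have h1 := hfs a₀ ha₀K
      have h2 := hsf
      rw [hfv a₀, h0, inner_zero_left] at h1
      rw [hfv p, h0, inner_zero_left] at h2
      linarith
    have hvn : 0 < ‖v‖ := norm_pos_iff.2 hvne
    set u := ‖v‖⁻¹ • v with hu
    have hun : ‖u‖ = 1 := by
      rw [hu, norm_smul, norm_inv, norm_norm, inv_mul_cancel₀ hvn.ne']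
    have hcK : ∀ x ∈ K, ⟪u, x⟫ ≤ s/‖v‖ := by
      intro x hx
      rw [hu, real_inner_smul_left]
      have h1 : ⟪v, x⟫ ≤ s := by rw [← hfv x]; exact (hfs x hx).le
      calc ‖v‖⁻¹ * ⟪v,x⟫ ≤ ‖v‖⁻¹ * s := mul_le_mul_of_nonneg_left h1 (by positivity)
        _ = s/‖v‖ := by field_simp
    have hgr := grunbaum (by omega) K hKconv hKcomp hVpos u hun (s/‖v‖) hcK
    rw [← hb, hVKtoReal, hDK, ← hr] at hgr
    have hup : s/‖v‖ < ⟪u, p⟫ := by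
      rw [hu, real_inner_smul_left]
      have h2 : s < ⟪v, p⟫ := by rw [← hfv p]; exact hsf
      calc s/‖v‖ = ‖v‖⁻¹ * s := by field_simp
        _ < ‖v‖⁻¹ * ⟪v,p⟫ := by
            apply mul_lt_mul_of_pos_left h2 (by positivity)
    have hineq : ⟪u, p⟫ ≤ ⟪u, b⟫ + dist p b := by
      have h1 : ⟪u, p - b⟫ ≤ ‖u‖ * ‖p - b‖ := real_inner_le_norm u (p - b)
      rw [inner_sub_right] at h1
      rw [hun, one_mul, ← dist_eq_norm] at h1
      linarith
    linarith
  refine ⟨b, ?_⟩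
  intro y hy
  rw [mem_closedBall] at hy
  set t := (r - r₀)/(‖y - z‖ + 1) with ht
  have hrr₀ : 0 < r - r₀ := by linarith
  have ht0 : 0 < t := div_pos hrr₀ (by positivity)
  set y' := y + t • (y - z) with hy'
  have hy'K : y' ∈ K := by
    apply hball
    have hd1 : dist y' y = t * ‖y - z‖ := by
      rw [hy', dist_eq_norm, add_sub_cancel_left, norm_smul]
      simp [abs_of_pos ht0]
    have h1 : dist y' b ≤ dist y b + t * ‖y - z‖ := by
      calc dist y' b ≤ dist y' y + dist y b := dist_triangle y' y b
        _ = dist y b + t * ‖y - z‖ := by rw [hd1]; ring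
    have h2 : t * ‖y - z‖ < r - r₀ := by
      rw [ht, div_mul_eq_mul_div, div_lt_iff₀ (by positivity)]
      nlinarith [norm_nonneg (y - z), hrr₀]
    linarith
  have hyseg : y ∈ openSegment ℝ z y' := by
    have h1t : (0:ℝ) < 1 + t := by linarith
    refine ⟨t/(1+t), 1/(1+t), div_pos ht0 h1t, div_pos one_pos h1t, ?_, ?_⟩
    · field_simp
      ring
    · rw [hy']
      match_scalars <;> field_simp <;> ring
  exact interior_subset (hA.openSegment_interior_closure_subset_interior hz hy'K hyseg)
end
end
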